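/- arXiv:1805.08539 — 4 statements merged into one kernel-verified Lean document; each statement's English description precedes it below -/
import Mathlib

section
/- For every ε, δ ∈ (0,1) and every positive integer m with m ≥ 2/(ε²δ), it holds that ν(m,ε,δ) = 1; that is, for every positive integer n and every x ∈ ℝⁿ, feature hashing satisfies Pr[ | ‖Ax‖₂² − ‖x‖₂² | < ε‖x‖₂² ] ≥ 1 − δ. -/
open scoped BigOperators Classical
noncomputable section

namespace FH

def hashSq (n m : ℕ) (h : Fin n → Fin m) (σ : Fin n → Bool) (x : Fin n → ℝ) : ℝ :=
  ∑ i : Fin m, (∑ j : Fin n, (if h j = i then (if σ j then (1:ℝ) else -1) * x j else 0)) ^ 2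

def hashPr (n m : ℕ) (P : (Fin n → Fin m) → (Fin n → Bool) → Prop) : ℝ :=
  ((Finset.univ.filter (fun p : (Fin n → Fin m) × (Fin n → Bool) => P p.1 p.2)).card : ℝ) /
    (Fintype.card ((Fin n → Fin m) × (Fin n → Bool)) : ℝ)

def l2 (n : ℕ) (x : Fin n → ℝ) : ℝ := Real.sqrt (∑ j, x j ^ 2)

def linf (n : ℕ) (x : Fin n → ℝ) : ℝ := ⨆ j, |x j|

def goodPr (n m : ℕ) (ε : ℝ) (x : Fin n → ℝ) : ℝ :=
  hashPr n m (fun h σ => |hashSq n m h σ x - l2 n x ^ 2| < ε * l2 n x ^ 2)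

def nuSet (m : ℕ) (ε δ : ℝ) : Set ℝ :=
  {ν | ν ∈ Set.Icc (0:ℝ) 1 ∧ ∀ n : ℕ, 0 < n → ∀ x : Fin n → ℝ, x ≠ 0 →
    linf n x ≤ ν * l2 n x → 1 - δ ≤ goodPr n m ε x}

def nu (m : ℕ) (ε δ : ℝ) : ℝ := sSup (nuSet m ε δ)

def lg (x : ℝ) : ℝ := Real.logb 2 x


def sg (b : Bool) : ℝ := if b then 1 else -1

lemma sg_sq (b : Bool) : sg b * sg b = 1 := by cases b <;> simp [sg]

lemma sg_not (b : Bool) : sg (!b) = - sg b := by cases b <;> simp [sg]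

def offd (n : ℕ) : Finset (Fin n × Fin n) := Finset.univ.filter (fun p => p.1 ≠ p.2)

def ind {n m : ℕ} (h : Fin n → Fin m) (p : Fin n × Fin n) : ℝ :=
  if h p.1 = h p.2 then 1 else 0

def Y (n m : ℕ) (h : Fin n → Fin m) (σ : Fin n → Bool) (x : Fin n → ℝ) : ℝ :=
  ∑ p ∈ offd n, ind h p * sg (σ p.1) * sg (σ p.2) * x p.1 * x p.2

lemma l2_sq (n : ℕ) (x : Fin n → ℝ) : l2 n x ^ 2 = ∑ j, x j ^ 2 := by
  have : (0:ℝ) ≤ ∑ j, x j ^ 2 := Finset.sum_nonneg (fun j _ => sq_nonneg _)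
  rw [l2, Real.sq_sqrt this]

lemma hashSq_expand (n m : ℕ) (h : Fin n → Fin m) (σ : Fin n → Bool) (x : Fin n → ℝ) :
    hashSq n m h σ x = ∑ j : Fin n, ∑ k : Fin n,
      ind h (j, k) * sg (σ j) * sg (σ k) * x j * x k := by
  unfold hashSq
  have : ∀ i : Fin m, (∑ j : Fin n, (if h j = i then (if σ j then (1:ℝ) else -1) * x j else 0)) ^ 2
      = ∑ j : Fin n, ∑ k : Fin n,
        (if h j = i then (1:ℝ) else 0) * (if h k = i then (1:ℝ) else 0)
          * (sg (σ j) * sg (σ k) * x j * x k) := by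
    intro i
    rw [sq, Finset.sum_mul_sum]
    refine Finset.sum_congr rfl fun j _ => Finset.sum_congr rfl fun k _ => ?_
    by_cases h1 : h j = i <;> by_cases h2 : h k = i <;> simp [h1, h2, sg] <;> ring
  rw [Finset.sum_congr rfl (fun i _ => this i), Finset.sum_comm]
  refine Finset.sum_congr rfl fun j _ => ?_
  rw [Finset.sum_comm]
  refine Finset.sum_congr rfl fun k _ => ?_
  rw [← Finset.sum_mul]
  have key : ∀ i : Fin m, (if h j = i then (1:ℝ) else 0) * (if h k = i then (1:ℝ) else 0)
      = if i = h j then (if h k = h j then (1:ℝ) else 0) else 0 := by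
    intro i
    by_cases h1 : h j = i
    · subst h1; by_cases h2 : h k = h j <;> simp [h2]
    · rw [if_neg h1, zero_mul, if_neg (fun hh : i = h j => h1 hh.symm)]
  rw [Finset.sum_congr rfl (fun i _ => key i), Finset.sum_ite_eq']
  have hind : (if h k = h j then (1:ℝ) else 0) = ind h (j, k) := by
    simp only [ind]; by_cases h2 : h k = h j
    · rw [if_pos h2, if_pos h2.symm]
    · rw [if_neg h2, if_neg (fun hh => h2 hh.symm)]
  simp only [Finset.mem_univ, if_true, hind]
  ring

lemma hashSq_eq (n m : ℕ) (h : Fin n → Fin m) (σ : Fin n → Bool) (x : Fin n → ℝ) :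
    hashSq n m h σ x = (∑ j, x j ^ 2) + Y n m h σ x := by
  rw [hashSq_expand]
  have hY : Y n m h σ x = ∑ j : Fin n, ∑ k ∈ Finset.univ.erase j,
      ind h (j, k) * sg (σ j) * sg (σ k) * x j * x k := by
    rw [Y, offd, Finset.sum_filter, Fintype.sum_prod_type]
    refine Finset.sum_congr rfl fun j _ => ?_
    rw [← Finset.filter_ne, Finset.sum_filter]
  rw [hY, ← Finset.sum_add_distrib]
  refine Finset.sum_congr rfl fun j _ => ?_
  rw [← Finset.add_sum_erase _ _ (Finset.mem_univ j)]
  congr 1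
  simp only [ind, eq_self_iff_true, if_true]
  cases σ j <;> simp [sg] <;> ring

lemma sum_flip {n : ℕ} (f : (Fin n → Bool) → ℝ) (t : Fin n)
    (hf : ∀ σ, f (Function.update σ t (!σ t)) = - f σ) : ∑ σ : Fin n → Bool, f σ = 0 := by
  have hinv : Function.Involutive (fun σ : Fin n → Bool => Function.update σ t (!σ t)) := by
    intro σ
    funext l
    by_cases hl : l = t
    · subst hl; simp [Function.update_self]
    · simp [Function.update_of_ne hl]
  have h1 : ∑ σ : Fin n → Bool, f (Function.update σ t (!σ t)) = ∑ σ : Fin n → Bool, f σ :=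
    Fintype.sum_equiv (hinv.toPerm _) _ _ (fun σ => rfl)
  have h2 : ∑ σ : Fin n → Bool, f (Function.update σ t (!σ t)) = - ∑ σ : Fin n → Bool, f σ := by
    rw [Finset.sum_congr rfl (fun σ _ => hf σ), ← Finset.sum_neg_distrib]
  linarith [h1, h2]

lemma sum_sg_zero {n : ℕ} (j k j' k' : Fin n) (hjk : j ≠ k) (hj'k' : j' ≠ k')
    (hne : ¬((j = j' ∧ k = k') ∨ (j = k' ∧ k = j'))) :
    ∑ σ : Fin n → Bool, sg (σ j) * sg (σ k) * (sg (σ j') * sg (σ k')) = 0 := by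
  by_cases h1 : j = j'
  · subst h1
    have hk2 : k ≠ k' := fun e => hne (Or.inl ⟨rfl, e⟩)
    refine sum_flip _ k (fun σ => ?_)
    rw [Function.update_self, Function.update_of_ne hjk,
        Function.update_of_ne (Ne.symm hk2), sg_not]
    ring
  · by_cases h2 : j = k'
    · subst h2
      have hk1 : k ≠ j' := fun e => hne (Or.inr ⟨rfl, e⟩)
      refine sum_flip _ k (fun σ => ?_)
      rw [Function.update_self, Function.update_of_ne hjk,
          Function.update_of_ne (Ne.symm hk1), sg_not]
      ring
    · refine sum_flip _ j (fun σ => ?_)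
      rw [Function.update_self, Function.update_of_ne hjk.symm,
          Function.update_of_ne (fun e : j' = j => h1 e.symm),
          Function.update_of_ne (fun e : k' = j => h2 e.symm), sg_not]
      ring

lemma sum_ind_eq {n m : ℕ} (j k : Fin n) (hjk : j ≠ k) :
    ∑ h : Fin n → Fin m, ind h (j, k) = (m : ℝ) ^ (n - 1) := by
  rw [← Equiv.sum_comp (Equiv.funSplitAt k (Fin m)).symm (fun h => ind h (j, k)),
    Fintype.sum_prod_type_right]
  have step : ∀ g : {l : Fin n // l ≠ k} → Fin m,
      ∑ a : Fin m, ind ((Equiv.funSplitAt k (Fin m)).symm (a, g)) (j, k) = 1 := by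
    intro g
    have : ∀ a : Fin m, ind ((Equiv.funSplitAt k (Fin m)).symm (a, g)) (j, k)
        = if g ⟨j, hjk⟩ = a then (1:ℝ) else 0 := by
      intro a
      simp [ind, Equiv.funSplitAt, Equiv.piSplitAt, hjk]
    rw [Finset.sum_congr rfl (fun a _ => this a), Finset.sum_ite_eq]
    simp
  rw [Finset.sum_congr rfl (fun g _ => step g)]
  simp only [Finset.sum_const, Finset.card_univ, nsmul_eq_mul, mul_one]
  have : Fintype.card ({l : Fin n // l ≠ k} → Fin m) = m ^ (n - 1) := by
    rw [Fintype.card_fun, Fintype.card_fin]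
    congr 1
    have : Fintype.card {l : Fin n // ¬ l = k} = n - 1 := by
      rw [Fintype.card_subtype_compl]
      simp
    exact this
  rw [this]
  push_cast
  ring

lemma ind_mul_self {n m : ℕ} (h : Fin n → Fin m) (p : Fin n × Fin n) :
    ind h p * ind h p = ind h p := by
  simp only [ind]; split_ifs <;> norm_num

lemma ind_swap {n m : ℕ} (h : Fin n → Fin m) (p : Fin n × Fin n) :
    ind h p.swap = ind h p := by
  simp only [ind, Prod.fst_swap, Prod.snd_swap]
  by_cases h2 : h p.1 = h p.2
  · rw [if_pos h2, if_pos h2.symm]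
  · rw [if_neg h2, if_neg (fun e => h2 e.symm)]

def termT (n m : ℕ) (x : Fin n → ℝ) (p q : Fin n × Fin n)
    (h : Fin n → Fin m) (σ : Fin n → Bool) : ℝ :=
  ind h p * ind h q * (sg (σ p.1) * sg (σ p.2) * (sg (σ q.1) * sg (σ q.2)))
    * (x p.1 * x p.2 * (x q.1 * x q.2))

lemma Y_sq_expand (n m : ℕ) (h : Fin n → Fin m) (σ : Fin n → Bool) (x : Fin n → ℝ) :
    (Y n m h σ x) ^ 2 = ∑ p ∈ offd n, ∑ q ∈ offd n, termT n m x p q h σ := by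
  rw [sq, Y, Finset.sum_mul_sum]
  exact Finset.sum_congr rfl fun p _ => Finset.sum_congr rfl fun q _ => by
    rw [termT]; ring

lemma sum_termT (n m : ℕ) (x : Fin n → ℝ) (p q : Fin n × Fin n)
    (hp : p ∈ offd n) (hq : q ∈ offd n) :
    ∑ hσ : (Fin n → Fin m) × (Fin n → Bool), termT n m x p q hσ.1 hσ.2 =
      if q = p ∨ q = p.swap then
        (m:ℝ) ^ (n-1) * 2 ^ n * (x p.1 * x p.2 * (x q.1 * x q.2)) else 0 := by
  have hp' : p.1 ≠ p.2 := (Finset.mem_filter.1 hp).2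
  have hq' : q.1 ≠ q.2 := (Finset.mem_filter.1 hq).2
  rw [Fintype.sum_prod_type]
  have hσsum : ∀ h : Fin n → Fin m, ∑ σ : Fin n → Bool, termT n m x p q h σ
      = ind h p * ind h q *
        (∑ σ : Fin n → Bool, sg (σ p.1) * sg (σ p.2) * (sg (σ q.1) * sg (σ q.2)))
        * (x p.1 * x p.2 * (x q.1 * x q.2)) := by
    intro h
    simp only [termT]
    rw [← Finset.sum_mul, ← Finset.mul_sum]
  rw [Finset.sum_congr rfl (fun h _ => hσsum h)]
  by_cases hcase : q = p ∨ q = p.swap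
  · rw [if_pos hcase]
    have hsg : (∑ σ : Fin n → Bool, sg (σ p.1) * sg (σ p.2) * (sg (σ q.1) * sg (σ q.2)))
        = 2 ^ n := by
      have hone : ∀ σ : Fin n → Bool,
          sg (σ p.1) * sg (σ p.2) * (sg (σ q.1) * sg (σ q.2)) = 1 := by
        intro σ
        rcases hcase with rfl | rfl
        · calc sg (σ q.1) * sg (σ q.2) * (sg (σ q.1) * sg (σ q.2))
              = (sg (σ q.1) * sg (σ q.1)) * (sg (σ q.2) * sg (σ q.2)) := by ring
            _ = 1 := by rw [sg_sq, sg_sq, one_mul]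
        · calc sg (σ p.1) * sg (σ p.2) * (sg (σ p.swap.1) * sg (σ p.swap.2))
              = (sg (σ p.1) * sg (σ p.1)) * (sg (σ p.2) * sg (σ p.2)) := by
                simp only [Prod.fst_swap, Prod.snd_swap]; ring
            _ = 1 := by rw [sg_sq, sg_sq, one_mul]
      rw [Finset.sum_congr rfl (fun σ _ => hone σ)]
      simp [Finset.card_univ]
    have hind : ∀ h : Fin n → Fin m, ind h p * ind h q = ind h p := by
      intro h
      rcases hcase with rfl | rfl
      · exact ind_mul_self h q
      · rw [ind_swap]; exact ind_mul_self h p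
    rw [Finset.sum_congr rfl (fun h _ => by rw [hsg, hind h])]
    rw [← Finset.sum_mul, ← Finset.sum_mul, sum_ind_eq p.1 p.2 hp']
  · rw [if_neg hcase]
    have hzero : (∑ σ : Fin n → Bool, sg (σ p.1) * sg (σ p.2) * (sg (σ q.1) * sg (σ q.2)))
        = 0 := by
      refine sum_sg_zero p.1 p.2 q.1 q.2 hp' hq' (fun hc => hcase ?_)
      rcases hc with ⟨h1, h2⟩ | ⟨h1, h2⟩
      · exact Or.inl (Prod.ext h1.symm h2.symm)
      · exact Or.inr (Prod.ext h2.symm h1.symm)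
    rw [Finset.sum_congr rfl (fun h _ => by rw [hzero, mul_zero, zero_mul])]
    simp

lemma sum_Y_sq (n m : ℕ) (x : Fin n → ℝ) :
    ∑ hσ : (Fin n → Fin m) × (Fin n → Bool), (Y n m hσ.1 hσ.2 x) ^ 2
      ≤ 2 * (m:ℝ) ^ (n-1) * 2 ^ n * (∑ j, x j ^ 2) ^ 2 := by
  have step1 : ∑ hσ : (Fin n → Fin m) × (Fin n → Bool), (Y n m hσ.1 hσ.2 x) ^ 2
      = ∑ p ∈ offd n, ∑ q ∈ offd n,
          ∑ hσ : (Fin n → Fin m) × (Fin n → Bool), termT n m x p q hσ.1 hσ.2 := by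
    rw [Finset.sum_congr rfl (fun hσ _ => Y_sq_expand n m hσ.1 hσ.2 x), Finset.sum_comm]
    refine Finset.sum_congr rfl fun p _ => Finset.sum_comm
  rw [step1]
  have step2 : ∀ p ∈ offd n, (∑ q ∈ offd n,
      ∑ hσ : (Fin n → Fin m) × (Fin n → Bool), termT n m x p q hσ.1 hσ.2)
      = 2 * (m:ℝ) ^ (n-1) * 2 ^ n * ((x p.1) ^ 2 * (x p.2) ^ 2) := by
    intro p hp
    have hp' : p.1 ≠ p.2 := (Finset.mem_filter.1 hp).2
    have hswap : p.swap ∈ offd n := by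
      simp only [offd, Finset.mem_filter, Finset.mem_univ, true_and, Prod.fst_swap,
        Prod.snd_swap]
      exact fun e => hp' e.symm
    have hps : p ≠ p.swap := by
      intro e
      have : p.1 = p.2 := by
        have := congrArg Prod.fst e
        simpa using this
      exact hp' this
    have hsub : ({p, p.swap} : Finset (Fin n × Fin n)) ⊆ offd n := by
      intro q hq
      rcases Finset.mem_insert.1 hq with rfl | hq
      · exact hp
      · rw [Finset.mem_singleton.1 hq]; exact hswap
    rw [← Finset.sum_subset hsub]
    · rw [Finset.sum_pair hps, sum_termT n m x p p hp hp,
        sum_termT n m x p p.swap hp hswap, if_pos (Or.inl rfl), if_pos (Or.inr rfl)]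
      simp only [Prod.fst_swap, Prod.snd_swap]
      ring
    · intro q hq hq2
      rw [sum_termT n m x p q hp hq, if_neg]
      intro hc
      rcases hc with rfl | rfl
      · exact hq2 (Finset.mem_insert_self _ _)
      · exact hq2 (Finset.mem_insert_of_mem (Finset.mem_singleton_self _))
  rw [Finset.sum_congr rfl step2, ← Finset.mul_sum]
  have hmono : (∑ p ∈ offd n, (x p.1) ^ 2 * (x p.2) ^ 2)
      ≤ ∑ p : Fin n × Fin n, (x p.1) ^ 2 * (x p.2) ^ 2 := by
    refine Finset.sum_le_sum_of_subset_of_nonneg (Finset.subset_univ _) ?_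
    intro q _ _
    positivity
  have hval : (∑ p : Fin n × Fin n, (x p.1) ^ 2 * (x p.2) ^ 2) = (∑ j, x j ^ 2) ^ 2 := by
    rw [sq, Finset.sum_mul_sum, Fintype.sum_prod_type]
  have hc : (0:ℝ) ≤ 2 * (m:ℝ) ^ (n-1) * 2 ^ n := by positivity
  calc 2 * (m:ℝ) ^ (n-1) * 2 ^ n * (∑ p ∈ offd n, (x p.1) ^ 2 * (x p.2) ^ 2)
      ≤ 2 * (m:ℝ) ^ (n-1) * 2 ^ n * ((∑ j, x j ^ 2) ^ 2) := by
        rw [← hval]; exact mul_le_mul_of_nonneg_left hmono hc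
    _ = 2 * (m:ℝ) ^ (n-1) * 2 ^ n * (∑ j, x j ^ 2) ^ 2 := by ring


lemma main_bound (n m : ℕ) (hn : 0 < n) (hm : 0 < m) (ε δ : ℝ) (hε : 0 < ε) (hδ : 0 < δ)
    (hmδ : 2 / (ε ^ 2 * δ) ≤ (m:ℝ)) (x : Fin n → ℝ) (hx : x ≠ 0) :
    1 - δ ≤ ((Finset.univ.filter (fun p : (Fin n → Fin m) × (Fin n → Bool) =>
        |hashSq n m p.1 p.2 x - l2 n x ^ 2| < ε * l2 n x ^ 2)).card : ℝ) /
      (Fintype.card ((Fin n → Fin m) × (Fin n → Bool)) : ℝ) := by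
  have hL2 : 0 < ∑ j, x j ^ 2 := by
    obtain ⟨j, hj⟩ := Function.ne_iff.1 hx
    exact Finset.sum_pos' (fun i _ => sq_nonneg _)
      ⟨j, Finset.mem_univ j, pow_pos (abs_pos.2 hj) 2 |>.trans_eq (sq_abs _)⟩
  have hYdiff : ∀ p : (Fin n → Fin m) × (Fin n → Bool),
      hashSq n m p.1 p.2 x - l2 n x ^ 2 = Y n m p.1 p.2 x := by
    intro p
    rw [hashSq_eq, l2_sq]
    ring
  set G := Finset.univ.filter (fun p : (Fin n → Fin m) × (Fin n → Bool) =>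
      |hashSq n m p.1 p.2 x - l2 n x ^ 2| < ε * l2 n x ^ 2) with hG
  set B := Finset.univ.filter (fun p : (Fin n → Fin m) × (Fin n → Bool) =>
      ¬ |hashSq n m p.1 p.2 x - l2 n x ^ 2| < ε * l2 n x ^ 2) with hB
  have hcards : G.card + B.card = Fintype.card ((Fin n → Fin m) × (Fin n → Bool)) := by
    rw [hG, hB, Finset.card_filter_add_card_filter_not, Finset.card_univ]
  have hN : (Fintype.card ((Fin n → Fin m) × (Fin n → Bool)) : ℝ)
      = (m:ℝ) ^ n * 2 ^ n := by
    rw [Fintype.card_prod, Fintype.card_fun, Fintype.card_fun, Fintype.card_fin,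
      Fintype.card_fin, Fintype.card_bool]
    push_cast
    ring
  have hNpos : (0:ℝ) < (Fintype.card ((Fin n → Fin m) × (Fin n → Bool)) : ℝ) := by
    rw [hN]
    positivity
  -- Chebyshev
  have cheb : (B.card : ℝ) * (ε * (∑ j, x j ^ 2)) ^ 2
      ≤ 2 * (m:ℝ) ^ (n-1) * 2 ^ n * (∑ j, x j ^ 2) ^ 2 := by
    have h1 : (B.card : ℝ) * (ε * (∑ j, x j ^ 2)) ^ 2
        = ∑ p ∈ B, (ε * (∑ j, x j ^ 2)) ^ 2 := by
      rw [Finset.sum_const, nsmul_eq_mul]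
    rw [h1]
    have h2 : ∑ p ∈ B, (ε * (∑ j, x j ^ 2)) ^ 2 ≤ ∑ p ∈ B, (Y n m p.1 p.2 x) ^ 2 := by
      refine Finset.sum_le_sum (fun p hp => ?_)
      have hni := (Finset.mem_filter.1 hp).2
      rw [hYdiff p, l2_sq] at hni
      push_neg at hni
      have habs : ε * (∑ j, x j ^ 2) ≤ |Y n m p.1 p.2 x| := hni
      have h0 : (0:ℝ) ≤ ε * (∑ j, x j ^ 2) := le_of_lt (by positivity)
      calc (ε * (∑ j, x j ^ 2)) ^ 2 ≤ |Y n m p.1 p.2 x| ^ 2 := by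
            exact pow_le_pow_left₀ h0 habs 2
        _ = (Y n m p.1 p.2 x) ^ 2 := sq_abs _
    refine h2.trans ?_
    have h3 : ∑ p ∈ B, (Y n m p.1 p.2 x) ^ 2
        ≤ ∑ p : (Fin n → Fin m) × (Fin n → Bool), (Y n m p.1 p.2 x) ^ 2 :=
      Finset.sum_le_sum_of_subset_of_nonneg (Finset.subset_univ _)
        (fun p _ _ => sq_nonneg _)
    exact h3.trans (sum_Y_sq n m x)
  -- deduce card bound
  have hε2 : (0:ℝ) < ε ^ 2 := by positivity
  have hBle : (B.card : ℝ) * ε ^ 2 ≤ 2 * (m:ℝ) ^ (n-1) * 2 ^ n := by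
    have hL2sq : (0:ℝ) < (∑ j, x j ^ 2) ^ 2 := by positivity
    have : (B.card : ℝ) * ε ^ 2 * (∑ j, x j ^ 2) ^ 2
        ≤ 2 * (m:ℝ) ^ (n-1) * 2 ^ n * (∑ j, x j ^ 2) ^ 2 := by
      calc (B.card : ℝ) * ε ^ 2 * (∑ j, x j ^ 2) ^ 2
          = (B.card : ℝ) * (ε * (∑ j, x j ^ 2)) ^ 2 := by ring
        _ ≤ _ := cheb
    exact le_of_mul_le_mul_right this hL2sq
  have hpow : (m:ℝ) ^ n = (m:ℝ) ^ (n-1) * m := by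
    rw [← pow_succ]
    congr 1
    omega
  have hkey : (2:ℝ) ≤ ε ^ 2 * δ * m := by
    have hd : (0:ℝ) < ε ^ 2 * δ := by positivity
    have := (div_le_iff₀ hd).1 hmδ
    nlinarith [this]
  have hBδ : (B.card : ℝ) ≤ δ * ((m:ℝ) ^ n * 2 ^ n) := by
    have hmn : (0:ℝ) ≤ (m:ℝ) ^ (n-1) * 2 ^ n := by positivity
    have h4 : 2 * (m:ℝ) ^ (n-1) * 2 ^ n ≤ ε ^ 2 * δ * m * ((m:ℝ) ^ (n-1) * 2 ^ n) := by
      nlinarith [hkey, hmn]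
    have h5 : (B.card : ℝ) * ε ^ 2 ≤ ε ^ 2 * (δ * ((m:ℝ) ^ n * 2 ^ n)) := by
      calc (B.card : ℝ) * ε ^ 2 ≤ 2 * (m:ℝ) ^ (n-1) * 2 ^ n := hBle
        _ ≤ ε ^ 2 * δ * m * ((m:ℝ) ^ (n-1) * 2 ^ n) := h4
        _ = ε ^ 2 * (δ * ((m:ℝ) ^ n * 2 ^ n)) := by rw [hpow]; ring
    have := le_of_mul_le_mul_right (by linarith [h5] :
      (B.card : ℝ) * ε ^ 2 ≤ (δ * ((m:ℝ) ^ n * 2 ^ n)) * ε ^ 2) hε2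
    exact this
  rw [le_div_iff₀ hNpos]
  · have hGB : (G.card : ℝ) + (B.card : ℝ)
        = (Fintype.card ((Fin n → Fin m) × (Fin n → Bool)) : ℝ) := by
      rw [← hcards]
      push_cast
      ring
    nlinarith [hBδ, hGB, hN, hNpos]


theorem nu_eq_one_of_large_m :
    ∀ ε δ : ℝ, ε ∈ Set.Ioo (0:ℝ) 1 → δ ∈ Set.Ioo (0:ℝ) 1 → ∀ m : ℕ, 0 < m →
      2 / (ε^2 * δ) ≤ (m:ℝ) →
      nu m ε δ = 1 ∧
        ∀ n : ℕ, 0 < n → ∀ x : Fin n → ℝ, x ≠ 0 → 1 - δ ≤ goodPr n m ε x := by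
  intro ε δ hε hδ m hm hmδ
  have key : ∀ n : ℕ, 0 < n → ∀ x : Fin n → ℝ, x ≠ 0 → 1 - δ ≤ goodPr n m ε x := by
    intro n hn x hx
    rw [goodPr, hashPr]
    exact main_bound n m hn hm ε δ hε.1 hδ.1 hmδ x hx
  refine ⟨?_, key⟩
  have hmem : (1:ℝ) ∈ nuSet m ε δ :=
    ⟨Set.mem_Icc.2 ⟨zero_le_one, le_refl 1⟩, fun n hn x hx _ => key n hn x hx⟩
  have hub : ∀ y ∈ nuSet m ε δ, y ≤ 1 := fun y hy => hy.1.2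
  rw [nu]
  exact le_antisymm (csSup_le ⟨1, hmem⟩ hub) (le_csSup ⟨1, hub⟩ hmem)

end FH
end
end

section
/- For every positive integers n and m and every unit vector x ∈ ℝⁿ (‖x‖₂ = 1), the feature hashing matrix A satisfies E[ ( ‖Ax‖₂² − 1 )² ] ≤ 2/m, where the expectation is over the random choice of (h, σ). -/
open scoped BigOperators Classical
noncomputable section
set_option maxHeartbeats 1000000

namespace FH

def hashE (n m : ℕ) (f : (Fin n → Fin m) → (Fin n → Bool) → ℝ) : ℝ :=
  (∑ p : (Fin n → Fin m) × (Fin n → Bool), f p.1 p.2) /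
    (Fintype.card ((Fin n → Fin m) × (Fin n → Bool)) : ℝ)

def e {n : ℕ} (σ : Fin n → Bool) (j : Fin n) : ℝ := if σ j then 1 else -1

def cnt {n : ℕ} (a b c d j : Fin n) : ℕ :=
  (if j = a then 1 else 0) + (if j = b then 1 else 0) + (if j = c then 1 else 0) +
    (if j = d then 1 else 0)

lemma e_mul_self {n : ℕ} (σ : Fin n → Bool) (j : Fin n) : e σ j * e σ j = 1 := by
  unfold e; split <;> norm_num

lemma prod_cnt {n : ℕ} (a b c d : Fin n) (σ : Fin n → Bool) :
    ∏ j : Fin n, (e σ j) ^ (cnt a b c d j) = e σ a * e σ b * e σ c * e σ d := by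
  have f : ∀ j t : Fin n, e σ j ^ (if j = t then 1 else 0) = (if j = t then e σ j else 1) := by
    intro j t; split <;> simp
  have key : ∀ j : Fin n, (e σ j) ^ (cnt a b c d j) =
      ((if j = a then e σ j else 1) * (if j = b then e σ j else 1)) *
      ((if j = c then e σ j else 1) * (if j = d then e σ j else 1)) := by
    intro j
    unfold cnt
    rw [pow_add, pow_add, pow_add, f j a, f j b, f j c, f j d]
    ring
  rw [Finset.prod_congr rfl (fun j _ => key j)]
  simp only [Finset.prod_mul_distrib, Finset.prod_ite_eq', Finset.mem_univ, if_true]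
  ring

lemma sign_sum {n : ℕ} (a b c d : Fin n) (hab : a ≠ b) (hcd : c ≠ d) :
    ∑ σ : Fin n → Bool, e σ a * e σ b * e σ c * e σ d =
      if (c = a ∧ d = b) ∨ (c = b ∧ d = a) then (2:ℝ)^n else 0 := by
  have hps := Finset.prod_univ_sum (fun _ : Fin n => (Finset.univ : Finset Bool))
    (fun j bb => (if bb then (1:ℝ) else -1) ^ (cnt a b c d j))
  rw [Fintype.piFinset_univ] at hps
  have step1 : ∑ σ : Fin n → Bool, e σ a * e σ b * e σ c * e σ d =
      ∏ j : Fin n, ((1:ℝ) ^ (cnt a b c d j) + (-1:ℝ) ^ (cnt a b c d j)) := by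
    calc ∑ σ : Fin n → Bool, e σ a * e σ b * e σ c * e σ d
        = ∑ σ : Fin n → Bool, ∏ j : Fin n, (e σ j) ^ (cnt a b c d j) :=
          (Finset.sum_congr rfl (fun σ _ => prod_cnt a b c d σ)).symm
      _ = ∏ j : Fin n, ∑ bb : Bool, ((if bb then (1:ℝ) else -1)) ^ (cnt a b c d j) := by
          simp only [e]; exact hps.symm
      _ = ∏ j : Fin n, ((1:ℝ) ^ (cnt a b c d j) + (-1:ℝ) ^ (cnt a b c d j)) := by
          refine Finset.prod_congr rfl (fun j _ => ?_)
          simp [Fintype.sum_bool]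
  rw [step1]
  split
  · rename_i hm
    have hcnt : ∀ j, Even (cnt a b c d j) := by
      intro j
      rcases hm with ⟨hc, hd⟩ | ⟨hc, hd⟩ <;> rcases eq_or_ne j a with h1 | h1 <;>
        rcases eq_or_ne j b with h2 | h2 <;> simp [cnt, hc, hd, h1, h2, hab, Ne.symm hab] <;> decide
    have h2 : ∀ j ∈ (Finset.univ : Finset (Fin n)),
        ((1:ℝ) ^ (cnt a b c d j) + (-1:ℝ) ^ (cnt a b c d j)) = 2 := by
      intro j _
      rw [(hcnt j).neg_one_pow]
      norm_num
    rw [Finset.prod_congr rfl h2, Finset.prod_const, Finset.card_univ, Fintype.card_fin]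
  · rename_i hm
    push_neg at hm
    obtain ⟨j0, hj0⟩ : ∃ j0, cnt a b c d j0 = 1 := by
      rcases eq_or_ne c a with hca | hca
      · have hdb : d ≠ b := hm.1 hca
        have hda : d ≠ a := by rw [← hca]; exact hcd.symm
        exact ⟨d, by simp [cnt, hda, hdb, hcd.symm]⟩
      · rcases eq_or_ne d a with hda | hda
        · have hcb : c ≠ b := fun h => hm.2 h hda
          exact ⟨c, by simp [cnt, hca, hcb, hcd]⟩
        · exact ⟨a, by simp [cnt, hab, Ne.symm hca, Ne.symm hda]⟩
    refine Finset.prod_eq_zero (Finset.mem_univ j0) ?_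
    rw [hj0]
    norm_num



lemma hash_count {n m : ℕ} (j k : Fin n) (hjk : j ≠ k) :
    ∑ h : Fin n → Fin m, (if h j = h k then (1:ℝ) else 0) =
      (m : ℝ) ^ (n - 1) := by
  classical
  have h1 : ∑ h : Fin n → Fin m, (if h j = h k then (1:ℝ) else 0) =
      ∑ p : Fin m × ({j' : Fin n // j' ≠ k} → Fin m),
        (if p.2 ⟨j, hjk⟩ = p.1 then (1:ℝ) else 0) :=
    Fintype.sum_equiv (Equiv.funSplitAt k (Fin m)) _ _ (fun h => rfl)
  rw [h1, Fintype.sum_prod_type, Finset.sum_comm]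
  have h2 : ∀ r : {j' : Fin n // j' ≠ k} → Fin m,
      ∑ a : Fin m, (if r ⟨j, hjk⟩ = a then (1:ℝ) else 0) = 1 := by
    intro r
    rw [Finset.sum_ite_eq]
    simp
  rw [Finset.sum_congr rfl (fun r _ => h2 r), Finset.sum_const, Finset.card_univ]
  have h3 : Fintype.card ({j' : Fin n // j' ≠ k} → Fin m) = m ^ (n - 1) := by
    rw [Fintype.card_fun, Fintype.card_fin]
    congr 1
    rw [Fintype.card_subtype_compl, Fintype.card_subtype_eq, Fintype.card_fin]
  rw [h3]
  push_cast
  simp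
lemma hashSq_eq_s3 (n m : ℕ) (h : Fin n → Fin m) (σ : Fin n → Bool) (x : Fin n → ℝ) :
    hashSq n m h σ x =
      ∑ p : Fin n × Fin n,
        (if h p.1 = h p.2 then (e σ p.1 * e σ p.2) * (x p.1 * x p.2) else 0) := by
  unfold hashSq
  have expand : ∀ i : Fin m,
      (∑ j : Fin n, (if h j = i then e σ j * x j else 0)) ^ 2 =
      ∑ j : Fin n, ∑ k : Fin n,
        (if h j = i then e σ j * x j else 0) * (if h k = i then e σ k * x k else 0) := by
    intro i
    rw [sq, Finset.sum_mul_sum]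
  have step : ∑ i : Fin m, (∑ j : Fin n, (if h j = i then e σ j * x j else 0)) ^ 2 =
      ∑ j : Fin n, ∑ k : Fin n,
        (if h j = h k then (e σ j * e σ k) * (x j * x k) else 0) := by
    rw [Finset.sum_congr rfl (fun i _ => expand i), Finset.sum_comm]
    refine Finset.sum_congr rfl (fun j _ => ?_)
    rw [Finset.sum_comm]
    refine Finset.sum_congr rfl (fun k _ => ?_)
    have ptwise : ∀ i : Fin m,
        (if h j = i then e σ j * x j else 0) * (if h k = i then e σ k * x k else 0) =
        if h j = i then (if h k = h j then (e σ j * e σ k) * (x j * x k) else 0) else 0 := by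
      intro i
      by_cases h1 : h j = i
      · by_cases h2 : h k = i
        · have h3 : h k = h j := h2.trans h1.symm
          simp [h1, h2, h3]; ring
        · have h3 : ¬ h k = h j := fun hc => h2 (hc.trans h1)
          simp [h1, h2, h3]
      · simp [h1]
    rw [Finset.sum_congr rfl (fun i _ => ptwise i), Finset.sum_ite_eq]
    simp [eq_comm]
  rw [show (∑ i : Fin m, (∑ j : Fin n, (if h j = i then (if σ j then (1:ℝ) else -1) * x j else 0)) ^ 2) = ∑ i : Fin m, (∑ j : Fin n, (if h j = i then e σ j * x j else 0)) ^ 2 from rfl]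
  rw [step, Fintype.sum_prod_type]

lemma split_sum (n : ℕ) (F : Fin n × Fin n → ℝ) :
    ∑ p : Fin n × Fin n, F p =
      (∑ j : Fin n, F (j, j)) + ∑ p ∈ Finset.univ.offDiag, F p := by
  classical
  have : (Finset.univ : Finset (Fin n × Fin n)) =
      (Finset.univ : Finset (Fin n)).diag ∪ (Finset.univ : Finset (Fin n)).offDiag := by
    rw [Finset.diag_union_offDiag]
    simp [Finset.univ_product_univ]
  rw [this, Finset.sum_union (Finset.disjoint_diag_offDiag _), Finset.sum_diag]

lemma diag_sum (n : ℕ) (σ : Fin n → Bool) (x : Fin n → ℝ) (cond : Fin n → Prop)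
    [DecidablePred cond] (hc : ∀ j, cond j) :
    ∑ j : Fin n, (if cond j then (e σ j * e σ j) * (x j * x j) else 0) = ∑ j : Fin n, x j ^ 2 := by
  refine Finset.sum_congr rfl (fun j _ => ?_)
  rw [if_pos (hc j), e_mul_self, one_mul, sq]
lemma sigma_sum (n m : ℕ) (h : Fin n → Fin m) (x : Fin n → ℝ) :
    ∑ σ : Fin n → Bool,
      (∑ p ∈ Finset.univ.offDiag,
        (if h p.1 = h p.2 then (e σ p.1 * e σ p.2) * (x p.1 * x p.2) else 0)) ^ 2 =
    (2:ℝ)^n * 2 * ∑ p ∈ Finset.univ.offDiag,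
        (if h p.1 = h p.2 then (x p.1 * x p.2) ^ 2 else 0) := by
  classical
  set w : Fin n × Fin n → ℝ := fun p => if h p.1 = h p.2 then x p.1 * x p.2 else 0 with hw
  have hrw : ∀ (σ : Fin n → Bool) (p : Fin n × Fin n),
      (if h p.1 = h p.2 then (e σ p.1 * e σ p.2) * (x p.1 * x p.2) else 0) =
        (e σ p.1 * e σ p.2) * w p := by
    intro σ p
    rw [hw]
    by_cases hc : h p.1 = h p.2 <;> simp [hc]
  have expand : ∀ σ : Fin n → Bool,
      (∑ p ∈ Finset.univ.offDiag, (e σ p.1 * e σ p.2) * w p) ^ 2 =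
      ∑ p ∈ Finset.univ.offDiag, ∑ q ∈ Finset.univ.offDiag,
        (e σ p.1 * e σ p.2 * e σ q.1 * e σ q.2) * (w p * w q) := by
    intro σ
    rw [sq, Finset.sum_mul_sum]
    exact Finset.sum_congr rfl (fun p _ => Finset.sum_congr rfl (fun q _ => by ring))
  calc ∑ σ : Fin n → Bool,
      (∑ p ∈ Finset.univ.offDiag,
        (if h p.1 = h p.2 then (e σ p.1 * e σ p.2) * (x p.1 * x p.2) else 0)) ^ 2
      = ∑ σ : Fin n → Bool, ∑ p ∈ Finset.univ.offDiag, ∑ q ∈ Finset.univ.offDiag,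
          (e σ p.1 * e σ p.2 * e σ q.1 * e σ q.2) * (w p * w q) := by
        refine Finset.sum_congr rfl (fun σ _ => ?_)
        rw [Finset.sum_congr rfl (fun p _ => hrw σ p), expand σ]
    _ = ∑ p ∈ Finset.univ.offDiag, ∑ q ∈ Finset.univ.offDiag,
          (∑ σ : Fin n → Bool, e σ p.1 * e σ p.2 * e σ q.1 * e σ q.2) * (w p * w q) := by
        rw [Finset.sum_comm]
        refine Finset.sum_congr rfl (fun p _ => ?_)
        rw [Finset.sum_comm]
        refine Finset.sum_congr rfl (fun q _ => ?_)
        rw [Finset.sum_mul]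
    _ = ∑ p ∈ Finset.univ.offDiag,
          ((2:ℝ)^n * (w p * w p) + (2:ℝ)^n * (w p * w (p.2, p.1))) := by
        refine Finset.sum_congr rfl (fun p hp => ?_)
        obtain ⟨-, -, hp12⟩ := Finset.mem_offDiag.mp hp
        have key : ∀ q ∈ Finset.univ.offDiag,
            (∑ σ : Fin n → Bool, e σ p.1 * e σ p.2 * e σ q.1 * e σ q.2) * (w p * w q) =
            (if q = p then (2:ℝ)^n * (w p * w p) else 0) +
            (if q = (p.2, p.1) then (2:ℝ)^n * (w p * w (p.2, p.1)) else 0) := by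
          intro q hq
          obtain ⟨-, -, hq12⟩ := Finset.mem_offDiag.mp hq
          rw [sign_sum p.1 p.2 q.1 q.2 hp12 hq12]
          by_cases h1 : q = p
          · subst h1
            rw [if_pos (Or.inl ⟨rfl, rfl⟩), if_pos rfl,
                if_neg (fun hc : q = (q.2, q.1) => hq12 (congrArg Prod.fst hc))]
            ring
          · by_cases h2 : q = (p.2, p.1)
            · subst h2
              rw [if_pos (Or.inr ⟨rfl, rfl⟩), if_neg h1, if_pos rfl]
              ring
            · have hcond : ¬ ((q.1 = p.1 ∧ q.2 = p.2) ∨ (q.1 = p.2 ∧ q.2 = p.1)) := by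
                rintro (⟨ha, hb⟩ | ⟨ha, hb⟩)
                · exact h1 (Prod.ext ha hb)
                · exact h2 (Prod.ext ha hb)
              rw [if_neg hcond, if_neg h1, if_neg h2]
              ring
        rw [Finset.sum_congr rfl key, Finset.sum_add_distrib,
            Finset.sum_ite_eq' _ p, Finset.sum_ite_eq' _ (p.2, p.1),
            if_pos hp, if_pos (by simpa [Finset.mem_offDiag] using Ne.symm hp12)]
    _ = (2:ℝ)^n * 2 * ∑ p ∈ Finset.univ.offDiag,
        (if h p.1 = h p.2 then (x p.1 * x p.2) ^ 2 else 0) := by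
        rw [Finset.mul_sum]
        refine Finset.sum_congr rfl (fun p _ => ?_)
        have hswap : w (p.2, p.1) = w p := by
          rw [hw]; simp only []
          by_cases hc : h p.1 = h p.2
          · rw [if_pos hc, if_pos hc.symm, mul_comm]
          · rw [if_neg hc, if_neg (fun hc2 => hc hc2.symm)]
        have hsq : w p * w p = if h p.1 = h p.2 then (x p.1 * x p.2) ^ 2 else 0 := by
          rw [hw]
          by_cases hc : h p.1 = h p.2 <;> simp [hc, sq]
        rw [hswap, hsq]
        ring

theorem second_moment_bound :
    ∀ n m : ℕ, 0 < n → 0 < m → ∀ x : Fin n → ℝ, l2 n x = 1 →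
      hashE n m (fun h σ => (hashSq n m h σ x - 1) ^ 2) ≤ 2 / (m:ℝ) := by
  intro n m hn hm x hx
  have hx2 : ∑ j, x j ^ 2 = 1 := Real.sqrt_eq_one.mp hx
  -- hashSq minus one
  have hsub : ∀ (h : Fin n → Fin m) (σ : Fin n → Bool), hashSq n m h σ x - 1 =
      ∑ p ∈ Finset.univ.offDiag,
        (if h p.1 = h p.2 then (e σ p.1 * e σ p.2) * (x p.1 * x p.2) else 0) := by
    intro h σ
    rw [hashSq_eq_s3, split_sum n
      (fun p => if h p.1 = h p.2 then (e σ p.1 * e σ p.2) * (x p.1 * x p.2) else 0)]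
    have hdiag : (∑ j : Fin n,
        (if h j = h j then (e σ j * e σ j) * (x j * x j) else 0)) = 1 := by
      rw [Finset.sum_congr rfl (fun j _ => by
        rw [if_pos rfl, e_mul_self, one_mul, ← sq])]
      exact hx2
    rw [hdiag]
    ring
  set S : ℝ := ∑ p ∈ Finset.univ.offDiag, (x p.1 * x p.2) ^ 2 with hSdef
  -- total sum
  have htot : (∑ p : (Fin n → Fin m) × (Fin n → Bool), (hashSq n m p.1 p.2 x - 1) ^ 2) =
      (2:ℝ)^n * 2 * ((m:ℝ)^(n-1) * S) := by
    rw [Fintype.sum_prod_type]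
    have inner : ∀ h : Fin n → Fin m,
        (∑ σ : Fin n → Bool, (hashSq n m h σ x - 1) ^ 2) =
        (2:ℝ)^n * 2 * ∑ p ∈ Finset.univ.offDiag,
          (if h p.1 = h p.2 then (x p.1 * x p.2) ^ 2 else 0) := by
      intro h
      rw [Finset.sum_congr rfl (fun σ _ => by rw [hsub h σ]), sigma_sum]
    rw [Finset.sum_congr rfl (fun h _ => inner h), ← Finset.mul_sum, Finset.sum_comm]
    congr 1
    rw [Finset.mul_sum]
    refine Finset.sum_congr rfl (fun p hp => ?_)
    obtain ⟨-, -, hp12⟩ := Finset.mem_offDiag.mp hp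
    have : ∀ h : Fin n → Fin m,
        (if h p.1 = h p.2 then (x p.1 * x p.2) ^ 2 else 0) =
        (x p.1 * x p.2) ^ 2 * (if h p.1 = h p.2 then (1:ℝ) else 0) := by
      intro h; by_cases hc : h p.1 = h p.2 <;> simp [hc]
    rw [Finset.sum_congr rfl (fun h _ => this h), ← Finset.mul_sum,
      hash_count p.1 p.2 hp12]
    ring
  have hS1 : S ≤ 1 := by
    have hsub2 : (Finset.univ : Finset (Fin n)).offDiag ⊆
        (Finset.univ : Finset (Fin n)) ×ˢ (Finset.univ : Finset (Fin n)) := by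
      intro p hp
      simp [Finset.mem_product]
    calc S ≤ ∑ p ∈ (Finset.univ : Finset (Fin n)) ×ˢ (Finset.univ : Finset (Fin n)),
          (x p.1 * x p.2) ^ 2 :=
        Finset.sum_le_sum_of_subset_of_nonneg hsub2 (fun p _ _ => sq_nonneg _)
      _ = (∑ j, x j ^ 2) * (∑ j, x j ^ 2) := by
        rw [Finset.sum_product, Finset.sum_mul_sum]
        exact Finset.sum_congr rfl (fun j _ => Finset.sum_congr rfl (fun k _ => by ring))
      _ = 1 := by rw [hx2]; norm_num
  have hS0 : 0 ≤ S := Finset.sum_nonneg (fun p _ => sq_nonneg _)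
  have hcard : (Fintype.card ((Fin n → Fin m) × (Fin n → Bool)) : ℝ) =
      (m:ℝ)^n * (2:ℝ)^n := by
    rw [Fintype.card_prod, Fintype.card_fun, Fintype.card_fun, Fintype.card_fin,
      Fintype.card_fin, Fintype.card_bool]
    push_cast
    ring
  unfold hashE
  rw [htot, hcard]
  have hm0 : (0:ℝ) < (m:ℝ) := by exact_mod_cast hm
  have hpos : (0:ℝ) < (m:ℝ)^n * (2:ℝ)^n := by positivity
  rw [div_le_div_iff₀ hpos hm0]
  have hpow : (m:ℝ)^(n-1) * (m:ℝ) = (m:ℝ)^n := by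
    rw [← pow_succ]
    congr 1
    omega
  have lhs_eq : (2:ℝ)^n * 2 * ((m:ℝ)^(n-1) * S) * (m:ℝ) =
      (2 * (2:ℝ)^n * ((m:ℝ)^(n-1) * (m:ℝ))) * S := by ring
  rw [lhs_eq, hpow]
  have : (2 * (2:ℝ)^n * (m:ℝ)^n) * S ≤ (2 * (2:ℝ)^n * (m:ℝ)^n) * 1 :=
    mul_le_mul_of_nonneg_left hS1 (by positivity)
  calc (2 * (2:ℝ)^n * (m:ℝ)^n) * S ≤ (2 * (2:ℝ)^n * (m:ℝ)^n) * 1 := this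
    _ = 2 * ((m:ℝ)^n * (2:ℝ)^n) := by ring

end FH
end
end

section
/- There exists a constant C > 0 such that for all integers r, α, β with 1 ≤ β ≤ α/2, 2β ≤ α ≤ r, and r − α even, if H is chosen uniformly at random from ℋ_{α,β,r}, then the probability that every vertex of H has even degree (equivalently, that H belongs to 𝒢_{α,β,r}) is at least 2^{−C·r}. -/
open scoped BigOperators Classical
noncomputable section

namespace FHGraph

def edgeGraph (α r : ℕ) (f : Fin r → Sym2 (Fin α)) : SimpleGraph (Fin α) where
  Adj v w := v ≠ w ∧ ∃ p, f p = s(v, w)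
  symm := by
    refine ⟨?_⟩
    rintro v w ⟨hvw, p, hp⟩
    exact ⟨hvw.symm, p, by rw [hp, Sym2.eq_swap]⟩
  loopless := ⟨by rintro v ⟨h, -⟩; exact h rfl⟩

def edgeDeg (α r : ℕ) (f : Fin r → Sym2 (Fin α)) (v : Fin α) : ℕ :=
  (Finset.univ.filter (fun p : Fin r => v ∈ f p)).card

def numCC (α r : ℕ) (f : Fin r → Sym2 (Fin α)) : ℕ :=
  Nat.card (edgeGraph α r f).ConnectedComponent

def Gfam (α β r : ℕ) : Set (Fin r → Sym2 (Fin α)) :=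
  {f | (∀ p, ¬ (f p).IsDiag) ∧ (∀ v, ∃ p, v ∈ f p) ∧
    (∀ v, Even (edgeDeg α r f v)) ∧ numCC α r f = β}

def Delta (α β r : ℕ) : ℝ :=
  (α:ℝ)^(2*α) / (β:ℝ)^β * (((α:ℝ) - 2*β)^2 + 4*((α:ℝ) - β))^(r - α)

/-- The simple graph underlying the multigraph consisting of the first `α` edges of `f`. -/
def firstGraph (α r : ℕ) (f : Fin r → Sym2 (Fin α)) : SimpleGraph (Fin α) where
  Adj v w := v ≠ w ∧ ∃ p : Fin r, (p:ℕ) < α ∧ f p = s(v, w)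
  symm := by
    refine ⟨?_⟩
    rintro v w ⟨hvw, p, hpα, hp⟩
    exact ⟨hvw.symm, p, hpα, by rw [hp, Sym2.eq_swap]⟩
  loopless := ⟨by rintro v ⟨h, -⟩; exact h rfl⟩

/-- Degree (with multiplicity) of `v` among the first `α` edges of `f`. -/
def firstDeg (α r : ℕ) (f : Fin r → Sym2 (Fin α)) (v : Fin α) : ℕ :=
  (Finset.univ.filter (fun p : Fin r => (p:ℕ) < α ∧ v ∈ f p)).card

/-- `ℋ_{α,β,r}`: edge-labeled loopless multigraphs on `[α]` with `r` labeled edges such that the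
first `α` edges form a disjoint union of `β` simple cycles, each spanning the vertex set of one
connected component (equivalently: among the first `α` edges every vertex has degree exactly two,
the graph they form has exactly `β` connected components of which `β−1` have exactly two vertices
and one has `α − 2(β−1)` vertices), and every remaining edge joins two vertices lying in the same
connected component. -/
def Hfam (α β r : ℕ) : Set (Fin r → Sym2 (Fin α)) :=
  {f | (∀ p, ¬ (f p).IsDiag) ∧
    (∀ v, firstDeg α r f v = 2) ∧
    Nat.card (firstGraph α r f).ConnectedComponent = β ∧
    (∃ c₀ : (firstGraph α r f).ConnectedComponent,
      Nat.card c₀.supp = α - 2*(β - 1) ∧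
      ∀ c : (firstGraph α r f).ConnectedComponent, c ≠ c₀ → Nat.card c.supp = 2) ∧
    (∀ p : Fin r, α ≤ (p:ℕ) → ∀ v w : Fin α, v ∈ f p → w ∈ f p →
      (firstGraph α r f).Reachable v w)}


-- head infrastructure
def hd {α : ℕ} (r : ℕ) (hle : α ≤ r) (f : Fin r → Sym2 (Fin α)) : Fin α → Sym2 (Fin α) :=
  fun i => f (Fin.castLE hle i)

def hdCount {α : ℕ} (d : Fin α → Sym2 (Fin α)) (v : Fin α) : ℕ :=
  (Finset.univ.filter (fun i : Fin α => v ∈ d i)).card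

def hdGraph {α : ℕ} (d : Fin α → Sym2 (Fin α)) : SimpleGraph (Fin α) where
  Adj v w := v ≠ w ∧ ∃ i, d i = s(v, w)
  symm := by
    refine ⟨?_⟩
    rintro v w ⟨hvw, i, hi⟩
    exact ⟨hvw.symm, i, by rw [hi, Sym2.eq_swap]⟩
  loopless := ⟨by rintro v ⟨h, -⟩; exact h rfl⟩

lemma firstDeg_eq_hd {α : ℕ} (r : ℕ) (hle : α ≤ r) (f : Fin r → Sym2 (Fin α)) (v : Fin α) :
    firstDeg α r f v = hdCount (hd r hle f) v := by
  unfold firstDeg hdCount hd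
  refine Finset.card_bij' (fun p hp => ⟨(p:ℕ), (Finset.mem_filter.mp hp).2.1⟩)
    (fun i _ => Fin.castLE hle i) ?_ ?_ ?_ ?_
  · intro p hp
    simp only [Finset.mem_filter, Finset.mem_univ, true_and] at hp ⊢
    have : Fin.castLE hle (⟨(p:ℕ), hp.1⟩ : Fin α) = p := by ext; rfl
    rw [this]; exact hp.2
  · intro i hi
    simp only [Finset.mem_filter, Finset.mem_univ, true_and] at hi ⊢
    exact ⟨i.2, hi⟩
  · intro p hp; ext; rfl
  · intro i hi; ext; rfl

lemma firstGraph_eq_hd {α : ℕ} (r : ℕ) (hle : α ≤ r) (f : Fin r → Sym2 (Fin α)) :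
    firstGraph α r f = hdGraph (hd r hle f) := by
  ext v w
  constructor
  · rintro ⟨hne, p, hpα, hp⟩
    refine ⟨hne, ⟨(p:ℕ), hpα⟩, ?_⟩
    have : Fin.castLE hle (⟨(p:ℕ), hpα⟩ : Fin α) = p := by ext; rfl
    rw [hd, this]; exact hp
  · rintro ⟨hne, i, hi⟩
    exact ⟨hne, Fin.castLE hle i, i.2, hi⟩

-- splitting maps
def E1 (α h : ℕ) : Fin (α + h) → Fin (α + h + h) := Fin.castLE (by omega)

def E2 (α h : ℕ) : Fin (α + h) → Fin (α + h + h) :=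
  fun p => if (p:ℕ) < α then Fin.castLE (by omega) p else ⟨(p:ℕ) + h, by omega⟩

def combine {α : ℕ} (h : ℕ) (g g' : Fin (α + h) → Sym2 (Fin α)) :
    Fin (α + h + h) → Sym2 (Fin α) :=
  fun q => if hq : (q:ℕ) < α + h then g ⟨q, hq⟩ else g' ⟨(q:ℕ) - h, by omega⟩

lemma combine_comp1 {α h : ℕ} (f : Fin (α + h + h) → Sym2 (Fin α)) :
    combine h (f ∘ E1 α h) (f ∘ E2 α h) = f := by
  funext q
  unfold combine
  split_ifs with hq
  · have : E1 α h ⟨(q:ℕ), hq⟩ = q := by ext; rfl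
    simp only [Function.comp_apply, this]
  · have h1 : ¬ ((⟨(q:ℕ) - h, by omega⟩ : Fin (α + h)) : ℕ) < α := by simp; omega
    have : E2 α h ⟨(q:ℕ) - h, by omega⟩ = q := by
      unfold E2; rw [if_neg h1]; ext; simp; omega
    simp only [Function.comp_apply, this]

lemma comp1_combine {α h : ℕ} (g g' : Fin (α + h) → Sym2 (Fin α)) :
    combine h g g' ∘ E1 α h = g := by
  funext p
  simp only [Function.comp_apply, combine, E1, Fin.coe_castLE]
  rw [dif_pos p.2]

lemma comp2_combine {α h : ℕ} (g g' : Fin (α + h) → Sym2 (Fin α))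
    (hhd : hd (α+h) (by omega) g = hd (α+h) (by omega) g') :
    combine h g g' ∘ E2 α h = g' := by
  funext p
  simp only [Function.comp_apply, combine, E2]
  split_ifs with hp hq hq
  · have h1 := congrFun hhd ⟨(p:ℕ), hp⟩
    simp only [hd] at h1
    calc g ⟨((Fin.castLE (by omega : α + h ≤ α+h+h) p : Fin (α+h+h)):ℕ), hq⟩
        = g (Fin.castLE (by omega : α ≤ α + h) ⟨(p:ℕ), hp⟩) := congrArg g (Fin.ext (by simp))
      _ = g' (Fin.castLE (by omega : α ≤ α + h) ⟨(p:ℕ), hp⟩) := h1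
      _ = g' p := congrArg g' (Fin.ext rfl)
  · exfalso; simp only [Fin.coe_castLE] at hq; omega
  · exfalso; simp only [] at hq; omega
  · exact congrArg g' (Fin.ext (by simp))

lemma hd_comp1 {α h : ℕ} (f : Fin (α + h + h) → Sym2 (Fin α)) :
    hd (α+h) (by omega) (f ∘ E1 α h) = hd (α+h+h) (by omega) f := by
  funext i; exact congrArg f (Fin.ext rfl)

lemma hd_comp2 {α h : ℕ} (f : Fin (α + h + h) → Sym2 (Fin α)) :
    hd (α+h) (by omega) (f ∘ E2 α h) = hd (α+h+h) (by omega) f := by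
  funext i
  simp only [hd, Function.comp_apply, E2, Fin.coe_castLE, i.2, if_pos]
  exact congrArg f (Fin.ext rfl)

/-- The degree-count splitting identity. -/
lemma edgeDeg_split {α h : ℕ} (f : Fin (α + h + h) → Sym2 (Fin α)) (v : Fin α) :
    edgeDeg α (α+h+h) f v + hdCount (hd (α+h+h) (by omega) f) v
      = edgeDeg α (α+h) (f ∘ E1 α h) v + edgeDeg α (α+h) (f ∘ E2 α h) v := by
  classical
  -- split edgeDeg f into < α+h part and ≥ α+h part
  have hsplit : edgeDeg α (α+h+h) f v =
      ((Finset.univ.filter (fun q : Fin (α+h+h) => v ∈ f q ∧ (q:ℕ) < α + h)).card) +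
      ((Finset.univ.filter (fun q : Fin (α+h+h) => v ∈ f q ∧ ¬ (q:ℕ) < α + h)).card) := by
    rw [edgeDeg]
    rw [← Finset.card_filter_add_card_filter_not (s := Finset.univ.filter
      (fun q : Fin (α+h+h) => v ∈ f q)) (fun q => (q:ℕ) < α + h)]
    rw [Finset.filter_filter, Finset.filter_filter]
  have hsplit2 : edgeDeg α (α+h) (f ∘ E2 α h) v =
      ((Finset.univ.filter (fun p : Fin (α+h) => v ∈ (f ∘ E2 α h) p ∧ (p:ℕ) < α)).card) +
      ((Finset.univ.filter (fun p : Fin (α+h) => v ∈ (f ∘ E2 α h) p ∧ ¬ (p:ℕ) < α)).card) := by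
    rw [edgeDeg]
    rw [← Finset.card_filter_add_card_filter_not (s := Finset.univ.filter
      (fun p : Fin (α+h) => v ∈ (f ∘ E2 α h) p)) (fun p => (p:ℕ) < α)]
    rw [Finset.filter_filter, Finset.filter_filter]
  have e1 : (Finset.univ.filter (fun q : Fin (α+h+h) => v ∈ f q ∧ (q:ℕ) < α + h)).card
      = edgeDeg α (α+h) (f ∘ E1 α h) v := by
    rw [edgeDeg]
    refine Finset.card_bij' (fun q hq => ⟨(q:ℕ), (Finset.mem_filter.mp hq).2.2⟩)
      (fun p _ => E1 α h p) ?_ ?_ ?_ ?_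
    · intro q hq
      simp only [Finset.mem_filter, Finset.mem_univ, true_and] at hq ⊢
      have : E1 α h ⟨(q:ℕ), hq.2⟩ = q := Fin.ext rfl
      simpa [this] using hq.1
    · intro p hp
      simp only [Finset.mem_filter, Finset.mem_univ, true_and, Function.comp_apply] at hp ⊢
      exact ⟨hp, by simp [E1]⟩
    · intro q hq; exact Fin.ext rfl
    · intro p hp; exact Fin.ext rfl
  have e2 : (Finset.univ.filter (fun p : Fin (α+h) => v ∈ (f ∘ E2 α h) p ∧ (p:ℕ) < α)).card
      = hdCount (hd (α+h+h) (by omega) f) v := by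
    rw [← hd_comp2 f]
    rw [hdCount]
    refine Finset.card_bij' (fun p hp => ⟨(p:ℕ), (Finset.mem_filter.mp hp).2.2⟩)
      (fun i _ => Fin.castLE (by omega) i) ?_ ?_ ?_ ?_
    · intro p hp
      simp only [Finset.mem_filter, Finset.mem_univ, true_and] at hp ⊢
      have : (Fin.castLE (by omega : α ≤ α + h) ⟨(p:ℕ), hp.2⟩ : Fin (α+h)) = p := Fin.ext rfl
      simpa [hd, this] using hp.1
    · intro i hi
      simp only [Finset.mem_filter, Finset.mem_univ, true_and] at hi ⊢
      exact ⟨by simpa [hd] using hi, i.2⟩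
    · intro p hp; exact Fin.ext rfl
    · intro i hi; exact Fin.ext rfl
  have e3 : (Finset.univ.filter (fun q : Fin (α+h+h) => v ∈ f q ∧ ¬ (q:ℕ) < α + h)).card
      = (Finset.univ.filter (fun p : Fin (α+h) => v ∈ (f ∘ E2 α h) p ∧ ¬ (p:ℕ) < α)).card := by
    refine Finset.card_bij' (fun q hq => ⟨(q:ℕ) - h, by omega⟩)
      (fun p hp => ⟨(p:ℕ) + h, by omega⟩) ?_ ?_ ?_ ?_
    · intro q hq
      simp only [Finset.mem_filter, Finset.mem_univ, true_and, Function.comp_apply] at hq ⊢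
      have hq2 : ¬ ((q:ℕ) < α + h) := hq.2
      constructor
      · have : E2 α h ⟨(q:ℕ) - h, by omega⟩ = q := by
          unfold E2; rw [if_neg (by simp; omega)]; exact Fin.ext (by simp; omega)
        rw [this]; exact hq.1
      · simp; omega
    · intro p hp
      simp only [Finset.mem_filter, Finset.mem_univ, true_and, Function.comp_apply] at hp ⊢
      constructor
      · have : E2 α h p = ⟨(p:ℕ) + h, by omega⟩ := by
          unfold E2; rw [if_neg hp.2]
        rw [← this]; exact hp.1
      · simp; omega
    · intro q hq
      simp only [Finset.mem_filter, Finset.mem_univ, true_and] at hq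
      exact Fin.ext (by simp; omega)
    · intro p hp; exact Fin.ext (by simp)
  rw [hsplit, hsplit2, e1, e2, e3]; ring

def StructOK (α β : ℕ) (d : Fin α → Sym2 (Fin α)) : Prop :=
  (∀ v, hdCount d v = 2) ∧
  Nat.card (hdGraph d).ConnectedComponent = β ∧
  (∃ c₀ : (hdGraph d).ConnectedComponent,
    Nat.card c₀.supp = α - 2*(β - 1) ∧
    ∀ c : (hdGraph d).ConnectedComponent, c ≠ c₀ → Nat.card c.supp = 2)

lemma mem_Hfam_iff {α β : ℕ} (r : ℕ) (hle : α ≤ r) (f : Fin r → Sym2 (Fin α)) :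
    f ∈ Hfam α β r ↔ (∀ p, ¬ (f p).IsDiag) ∧ StructOK α β (hd r hle f) ∧
      (∀ p : Fin r, α ≤ (p:ℕ) → ∀ v w : Fin α, v ∈ f p → w ∈ f p →
        (hdGraph (hd r hle f)).Reachable v w) := by
  have hg := firstGraph_eq_hd r hle f
  show (_ ∧ _ ∧ _ ∧ _ ∧ _) ↔ _
  rw [hg, StructOK]
  simp only [firstDeg_eq_hd r hle]
  tauto

def par (α r : ℕ) (f : Fin r → Sym2 (Fin α)) : Fin α → ZMod 2 :=
  fun v => (edgeDeg α r f v : ZMod 2)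

lemma par_split {α h : ℕ} (f : Fin (α + h + h) → Sym2 (Fin α))
    (h2 : ∀ v, hdCount (hd (α+h+h) (by omega) f) v = 2) :
    par α (α+h+h) f = par α (α+h) (f ∘ E1 α h) + par α (α+h) (f ∘ E2 α h) := by
  funext v
  have h0 := edgeDeg_split f v
  rw [h2 v] at h0
  have h1 := congrArg (fun n : ℕ => (n : ZMod 2)) h0
  simp only [Nat.cast_add] at h1
  rw [show ((2:ℕ) : ZMod 2) = 0 by decide, add_zero] at h1
  exact h1

lemma mem_Hfam_split {α β h : ℕ} (f : Fin (α + h + h) → Sym2 (Fin α)) :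
    f ∈ Hfam α β (α+h+h) ↔
      (f ∘ E1 α h) ∈ Hfam α β (α+h) ∧ (f ∘ E2 α h) ∈ Hfam α β (α+h) := by
  rw [mem_Hfam_iff (α+h+h) (by omega) f, mem_Hfam_iff (α+h) (by omega) (f ∘ E1 α h),
    mem_Hfam_iff (α+h) (by omega) (f ∘ E2 α h), hd_comp1, hd_comp2]
  constructor
  · rintro ⟨hdiag, hS, hT⟩
    refine ⟨⟨fun p => hdiag _, hS, fun p hp v w hv hw => hT (E1 α h p) hp v w hv hw⟩,
      ⟨fun p => hdiag _, hS, fun p hp v w hv hw => ?_⟩⟩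
    · refine hT (E2 α h p) ?_ v w hv hw
      simp only [E2, if_neg (by omega : ¬ (p:ℕ) < α)]
      omega
  · rintro ⟨⟨hd1, hS, hT1⟩, ⟨hd2, -, hT2⟩⟩
    refine ⟨fun q => ?_, hS, fun q hq v w hv hw => ?_⟩
    · by_cases hql : (q:ℕ) < α + h
      · have : E1 α h ⟨(q:ℕ), hql⟩ = q := Fin.ext rfl
        simpa [Function.comp, this] using hd1 ⟨(q:ℕ), hql⟩
      · have : E2 α h ⟨(q:ℕ) - h, by omega⟩ = q := by
          unfold E2; rw [if_neg (by simp; omega)]; exact Fin.ext (by simp; omega)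
        simpa [Function.comp, this] using hd2 ⟨(q:ℕ) - h, by omega⟩
    · by_cases hql : (q:ℕ) < α + h
      · have he : E1 α h ⟨(q:ℕ), hql⟩ = q := Fin.ext rfl
        refine hT1 ⟨(q:ℕ), hql⟩ hq v w ?_ ?_ <;> simpa [Function.comp, he]
      · have he : E2 α h ⟨(q:ℕ) - h, by omega⟩ = q := by
          unfold E2; rw [if_neg (by simp; omega)]; exact Fin.ext (by simp; omega)
        refine hT2 ⟨(q:ℕ) - h, by omega⟩ (by simp; omega) v w ?_ ?_ <;>
          simpa [Function.comp, he]

def HS (α β h : ℕ) (x : Fin α → ZMod 2) : Finset (Fin (α+h+h) → Sym2 (Fin α)) :=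
  Finset.univ.filter (fun f => f ∈ Hfam α β (α+h+h) ∧ par α (α+h+h) f = x)

def PS (α β h : ℕ) (x : Fin α → ZMod 2) :
    Finset ((Fin (α+h) → Sym2 (Fin α)) × (Fin (α+h) → Sym2 (Fin α))) :=
  Finset.univ.filter (fun gg => gg.1 ∈ Hfam α β (α+h) ∧ gg.2 ∈ Hfam α β (α+h) ∧
    hd (α+h) (Nat.le_add_right α h) gg.1 = hd (α+h) (Nat.le_add_right α h) gg.2 ∧
    par α (α+h) gg.1 + par α (α+h) gg.2 = x)

def AS (α β h : ℕ) (d : Fin α → Sym2 (Fin α)) (y : Fin α → ZMod 2) :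
    Finset (Fin (α+h) → Sym2 (Fin α)) :=
  Finset.univ.filter (fun g => g ∈ Hfam α β (α+h) ∧
    hd (α+h) (Nat.le_add_right α h) g = d ∧ par α (α+h) g = y)

lemma hdCount_two_of_mem {α β r : ℕ} (hle : α ≤ r) (f : Fin r → Sym2 (Fin α))
    (hf : f ∈ Hfam α β r) : ∀ v, hdCount (hd r hle f) v = 2 := by
  have := ((mem_Hfam_iff r hle f).mp hf).2.1.1
  exact this

lemma HS_card_eq_PS_card (α β h : ℕ) (x : Fin α → ZMod 2) :
    (HS α β h x).card = (PS α β h x).card := by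
  classical
  refine Finset.card_bij' (fun f _ => (f ∘ E1 α h, f ∘ E2 α h))
    (fun gg _ => combine h gg.1 gg.2) ?_ ?_ ?_ ?_
  · intro f hf
    simp only [HS, Finset.mem_filter, Finset.mem_univ, true_and] at hf
    obtain ⟨hmem, hpar⟩ := hf
    have hsplit := (mem_Hfam_split f).mp hmem
    simp only [PS, Finset.mem_filter, Finset.mem_univ, true_and]
    refine ⟨hsplit.1, hsplit.2, ?_, ?_⟩
    · rw [hd_comp1, hd_comp2]
    · rw [← par_split f (hdCount_two_of_mem (by omega) f hmem), hpar]
  · intro gg hgg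
    simp only [PS, Finset.mem_filter, Finset.mem_univ, true_and] at hgg
    obtain ⟨h1, h2, hhd, hpar⟩ := hgg
    simp only [HS, Finset.mem_filter, Finset.mem_univ, true_and]
    have hc1 : combine h gg.1 gg.2 ∘ E1 α h = gg.1 := comp1_combine gg.1 gg.2
    have hc2 : combine h gg.1 gg.2 ∘ E2 α h = gg.2 := comp2_combine gg.1 gg.2 hhd
    have hmem : combine h gg.1 gg.2 ∈ Hfam α β (α+h+h) := by
      rw [mem_Hfam_split, hc1, hc2]; exact ⟨h1, h2⟩
    refine ⟨hmem, ?_⟩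
    rw [par_split (combine h gg.1 gg.2) (hdCount_two_of_mem (by omega) _ hmem), hc1, hc2, hpar]
  · intro f _; exact combine_comp1 f
  · intro gg _
    exact Prod.ext (comp1_combine gg.1 gg.2) (comp2_combine gg.1 gg.2 (by
      simp only [PS, Finset.mem_filter] at *; tauto))

lemma PS_card_eq_sum (α β h : ℕ) (x : Fin α → ZMod 2) :
    (PS α β h x).card =
      ∑ dy : (Fin α → Sym2 (Fin α)) × (Fin α → ZMod 2),
        (AS α β h dy.1 dy.2).card * (AS α β h dy.1 (x - dy.2)).card := by
  classical
  rw [Finset.card_eq_sum_card_fiberwise (f := fun gg => (hd (α+h) (Nat.le_add_right α h) gg.1,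
      par α (α+h) gg.1)) (t := Finset.univ) (fun _ _ => Finset.mem_univ _)]
  refine Finset.sum_congr rfl (fun dy _ => ?_)
  have : Finset.filter (fun gg => (hd (α+h) (Nat.le_add_right α h) gg.1,
      par α (α+h) gg.1) = dy) (PS α β h x) = AS α β h dy.1 dy.2 ×ˢ AS α β h dy.1 (x - dy.2) := by
    ext gg
    simp only [Finset.mem_filter, Finset.mem_product, PS, AS, Finset.mem_univ, true_and,
      Prod.ext_iff]
    constructor
    · rintro ⟨⟨hm1, hm2, hhd, hpar⟩, hd1, hp1⟩
      exact ⟨⟨hm1, hd1, hp1⟩, ⟨hm2, by rw [← hhd, hd1], by rw [← hp1]; exact eq_sub_of_add_eq' hpar⟩⟩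
    · rintro ⟨⟨hm1, hd1, hp1⟩, ⟨hm2, hd2, hp2⟩⟩
      exact ⟨⟨hm1, hm2, by rw [hd1, hd2], by rw [hp1, hp2]; abel⟩, hd1, hp1⟩
  rw [this, Finset.card_product]

lemma PS_card_le (α β h : ℕ) (x : Fin α → ZMod 2) :
    (PS α β h x).card ≤ (PS α β h 0).card := by
  classical
  rw [PS_card_eq_sum, PS_card_eq_sum]
  have hzero : ∀ y : Fin α → ZMod 2, (0 : Fin α → ZMod 2) - y = y := by
    intro y; funext v; simp [CharTwo.neg_eq]
  simp only [hzero]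
  have key : 2 * ∑ dy : (Fin α → Sym2 (Fin α)) × (Fin α → ZMod 2),
      (AS α β h dy.1 dy.2).card * (AS α β h dy.1 (x - dy.2)).card ≤
      2 * ∑ dy : (Fin α → Sym2 (Fin α)) × (Fin α → ZMod 2),
      (AS α β h dy.1 dy.2).card * (AS α β h dy.1 dy.2).card := by
    rw [Finset.mul_sum, Finset.mul_sum]
    have hpt : ∀ dy : (Fin α → Sym2 (Fin α)) × (Fin α → ZMod 2),
        2 * ((AS α β h dy.1 dy.2).card * (AS α β h dy.1 (x - dy.2)).card) ≤
        (AS α β h dy.1 dy.2).card ^ 2 + (AS α β h dy.1 (x - dy.2)).card ^ 2 := by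
      intro dy
      have := two_mul_le_add_sq ((AS α β h dy.1 dy.2).card : ℤ) ((AS α β h dy.1 (x - dy.2)).card : ℤ)
      have h2 : (2:ℤ) * (((AS α β h dy.1 dy.2).card : ℤ) * ((AS α β h dy.1 (x - dy.2)).card : ℤ))
          ≤ ((AS α β h dy.1 dy.2).card:ℤ)^2 + ((AS α β h dy.1 (x - dy.2)).card:ℤ)^2 := by
        nlinarith [this]
      exact_mod_cast h2
    calc ∑ dy : (Fin α → Sym2 (Fin α)) × (Fin α → ZMod 2),
          2 * ((AS α β h dy.1 dy.2).card * (AS α β h dy.1 (x - dy.2)).card)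
        ≤ ∑ dy : (Fin α → Sym2 (Fin α)) × (Fin α → ZMod 2),
          ((AS α β h dy.1 dy.2).card ^ 2 + (AS α β h dy.1 (x - dy.2)).card ^ 2) :=
          Finset.sum_le_sum (fun dy _ => hpt dy)
      _ = ∑ dy : (Fin α → Sym2 (Fin α)) × (Fin α → ZMod 2), (AS α β h dy.1 dy.2).card ^ 2
          + ∑ dy : (Fin α → Sym2 (Fin α)) × (Fin α → ZMod 2), (AS α β h dy.1 (x - dy.2)).card ^ 2 :=
          Finset.sum_add_distrib
      _ = ∑ dy : (Fin α → Sym2 (Fin α)) × (Fin α → ZMod 2), (AS α β h dy.1 dy.2).card ^ 2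
          + ∑ dy : (Fin α → Sym2 (Fin α)) × (Fin α → ZMod 2), (AS α β h dy.1 dy.2).card ^ 2 := by
          congr 1
          refine Finset.sum_nbij' (fun dy => (dy.1, x - dy.2)) (fun dy => (dy.1, x - dy.2))
            ?_ ?_ ?_ ?_ ?_ <;> intro dy _ <;> simp [sub_sub_cancel]
      _ = ∑ dy : (Fin α → Sym2 (Fin α)) × (Fin α → ZMod 2),
          2 * ((AS α β h dy.1 dy.2).card * (AS α β h dy.1 dy.2).card) := by
          rw [← Finset.sum_add_distrib]
          refine Finset.sum_congr rfl (fun dy _ => by ring)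
  omega

lemma ncard_eq_filter_card {γ : Type*} [Fintype γ] (s : Set γ) :
    s.ncard = (Finset.univ.filter (fun a => a ∈ s)).card := by
  classical
  rw [Set.ncard_eq_toFinset_card' s]
  congr 1
  ext a
  simp [Set.mem_toFinset]

lemma even_iff_par_zero {α r : ℕ} (f : Fin r → Sym2 (Fin α)) :
    (∀ v, Even (edgeDeg α r f v)) ↔ par α r f = 0 := by
  rw [funext_iff]
  refine forall_congr' (fun v => ?_)
  simp only [par, Pi.zero_apply, ZMod.natCast_eq_zero_iff]
  exact even_iff_two_dvd

lemma inter_ncard (α β h : ℕ) :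
    (Hfam α β (α+h+h) ∩ {f | ∀ v, Even (edgeDeg α (α+h+h) f v)}).ncard
      = (HS α β h 0).card := by
  classical
  rw [ncard_eq_filter_card]
  congr 1
  ext f
  simp only [Finset.mem_filter, HS, Set.mem_inter_iff, Set.mem_setOf_eq, Finset.mem_univ, true_and]
  rw [even_iff_par_zero]

lemma main_count (α β h : ℕ) :
    (Hfam α β (α+h+h)).ncard ≤
      2^α * (Hfam α β (α+h+h) ∩ {f | ∀ v, Even (edgeDeg α (α+h+h) f v)}).ncard := by
  classical
  rw [inter_ncard, ncard_eq_filter_card]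
  have hden : (Finset.univ.filter (fun a => a ∈ Hfam α β (α+h+h))).card
      = ∑ x : Fin α → ZMod 2, (HS α β h x).card := by
    rw [Finset.card_eq_sum_card_fiberwise (f := fun f => par α (α+h+h) f) (t := Finset.univ)
      (fun _ _ => Finset.mem_univ _)]
    refine Finset.sum_congr rfl (fun x _ => ?_)
    congr 1
    ext f
    simp only [Finset.mem_filter, HS, Finset.mem_univ, true_and]
  rw [hden]
  calc ∑ x : Fin α → ZMod 2, (HS α β h x).card
      ≤ ∑ _x : Fin α → ZMod 2, (HS α β h 0).card := by
        refine Finset.sum_le_sum (fun x _ => ?_)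
        rw [HS_card_eq_PS_card, HS_card_eq_PS_card]
        exact PS_card_le α β h x
    _ = 2^α * (HS α β h 0).card := by
        rw [Finset.sum_const, smul_eq_mul]
        congr 1
        simp [Fintype.card_fun]

section Witness

variable (α β r : ℕ)

/-- cycle successor -/
def nxt (k p : ℕ) : ℕ := if p + 1 < k then p + 1 else 0

def f0 (hβ : 1 ≤ β) (hαβ : 2*β ≤ α) (hαr : α ≤ r) : Fin r → Sym2 (Fin α) :=
  fun p =>
    if hp : (p:ℕ) < α - 2*(β-1) then
      s((⟨(p:ℕ), by omega⟩ : Fin α), (⟨nxt (α - 2*(β-1)) (p:ℕ), by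
        unfold nxt; split <;> omega⟩ : Fin α))
    else if hp2 : (p:ℕ) < α then
      s((⟨(α - 2*(β-1)) + 2*((((p:ℕ)) - (α - 2*(β-1)))/2), by omega⟩ : Fin α),
        (⟨(α - 2*(β-1)) + 2*((((p:ℕ)) - (α - 2*(β-1)))/2) + 1, by omega⟩ : Fin α))
    else s((⟨0, by omega⟩ : Fin α), (⟨1, by omega⟩ : Fin α))

variable (hβ : 1 ≤ β) (hαβ : 2*β ≤ α) (hαr : α ≤ r)

lemma f0_nodiag : ∀ p, ¬ ((f0 α β r hβ hαβ hαr p).IsDiag) := by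
  intro p
  unfold f0
  split_ifs with h1 h2 <;> rw [Sym2.mk_isDiag_iff] <;> intro hcon <;>
    rw [Fin.ext_iff] at hcon <;> simp only at hcon
  · unfold nxt at hcon; split at hcon <;> omega
  · omega
  · omega

lemma f0_mem_iff (v : Fin α) (p : Fin r) :
    v ∈ f0 α β r hβ hαβ hαr p ↔
      (((p:ℕ) < α - 2*(β-1)) ∧ ((v:ℕ) = (p:ℕ) ∨ (v:ℕ) = nxt (α - 2*(β-1)) (p:ℕ))) ∨
      ((α - 2*(β-1) ≤ (p:ℕ) ∧ (p:ℕ) < α) ∧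
        ((v:ℕ) = (α - 2*(β-1)) + 2*((((p:ℕ)) - (α - 2*(β-1)))/2) ∨
         (v:ℕ) = (α - 2*(β-1)) + 2*((((p:ℕ)) - (α - 2*(β-1)))/2) + 1)) ∨
      ((α ≤ (p:ℕ)) ∧ ((v:ℕ) = 0 ∨ (v:ℕ) = 1)) := by
  unfold f0
  split_ifs with h1 h2 <;> rw [Sym2.mem_iff] <;> simp only [Fin.ext_iff, Fin.val_mk]
  · constructor
    · intro h; exact Or.inl ⟨h1, h⟩
    · rintro (⟨-, h⟩ | ⟨⟨h, -⟩, -⟩ | ⟨h, -⟩) <;> first | exact h | omega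
  · constructor
    · intro h; exact Or.inr (Or.inl ⟨⟨by omega, h2⟩, h⟩)
    · rintro (⟨h, -⟩ | ⟨-, h⟩ | ⟨h, -⟩) <;> first | exact h | omega
  · constructor
    · intro h; exact Or.inr (Or.inr ⟨by omega, h⟩)
    · rintro (⟨h, -⟩ | ⟨⟨-, h⟩, -⟩ | ⟨-, h⟩) <;> first | exact h | omega

lemma f0_firstDeg : ∀ v, firstDeg α r (f0 α β r hβ hαβ hαr) v = 2 := by
  intro v
  have hk2 : 2 ≤ α - 2*(β-1) := by omega
  have hkα : α - 2*(β-1) ≤ α := by omega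
  rw [firstDeg]
  by_cases hv : (v:ℕ) < α - 2*(β-1)
  · -- the two cycle edges at v
    have hset : Finset.univ.filter
        (fun p : Fin r => (p:ℕ) < α ∧ v ∈ f0 α β r hβ hαβ hαr p)
        = {(⟨(v:ℕ), by omega⟩ : Fin r),
           (⟨if (v:ℕ) = 0 then α - 2*(β-1) - 1 else (v:ℕ) - 1, by split <;> omega⟩ : Fin r)} := by
      ext p
      simp only [Finset.mem_filter, Finset.mem_univ, true_and, Finset.mem_insert,
        Finset.mem_singleton, Fin.ext_iff, Fin.val_mk]
      rw [f0_mem_iff]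
      constructor
      · rintro ⟨hpα, (⟨hp1, (h | h)⟩ | ⟨⟨hp1, hp2⟩, (h | h)⟩ | ⟨hp1, -⟩)⟩
        · left; omega
        · right; unfold nxt at h; split at h <;> split <;> omega
        · omega
        · omega
        · omega
      · rintro (h | h)
        · refine ⟨by omega, Or.inl ⟨by omega, Or.inl (by omega)⟩⟩
        · refine ⟨by rw [h]; split <;> omega, Or.inl ⟨by rw [h]; split <;> omega, Or.inr ?_⟩⟩
          unfold nxt
          split at h <;> split <;> omega
    rw [hset]
    rw [Finset.card_insert_of_notMem (by
      simp only [Finset.mem_singleton, Fin.ext_iff, Fin.val_mk]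
      split <;> omega), Finset.card_singleton]
  · -- the two parallel edges at v
    have hvα := v.2
    have hset : Finset.univ.filter
        (fun p : Fin r => (p:ℕ) < α ∧ v ∈ f0 α β r hβ hαβ hαr p)
        = {(⟨α - 2*(β-1) + 2*(((v:ℕ) - (α - 2*(β-1)))/2), by omega⟩ : Fin r),
           (⟨α - 2*(β-1) + 2*(((v:ℕ) - (α - 2*(β-1)))/2) + 1, by omega⟩ : Fin r)} := by
      ext p
      simp only [Finset.mem_filter, Finset.mem_univ, true_and, Finset.mem_insert,
        Finset.mem_singleton, Fin.ext_iff, Fin.val_mk]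
      rw [f0_mem_iff]
      constructor
      · rintro ⟨hpα, (⟨hp1, (h | h)⟩ | ⟨⟨hp1, hp2⟩, (h | h)⟩ | ⟨hp1, -⟩)⟩
        · omega
        · unfold nxt at h; split at h <;> omega
        · omega
        · omega
        · omega
      · rintro (h | h)
        · exact ⟨by omega, Or.inr (Or.inl ⟨⟨by omega, by omega⟩, by omega⟩)⟩
        · exact ⟨by omega, Or.inr (Or.inl ⟨⟨by omega, by omega⟩, by omega⟩)⟩
    rw [hset]
    rw [Finset.card_insert_of_notMem (by
      simp only [Finset.mem_singleton, Fin.ext_iff, Fin.val_mk]; omega), Finset.card_singleton]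

def idx (v : Fin α) : Fin β :=
  if h : (v:ℕ) < α - 2*(β-1) then ⟨0, hβ⟩
  else ⟨((v:ℕ) - (α - 2*(β-1)))/2 + 1, by have := v.2; omega⟩

lemma idx_lt {v : Fin α} (h : (v:ℕ) < α - 2*(β-1)) :
    idx α β r hβ hαβ v = ⟨0, hβ⟩ := dif_pos h

lemma idx_ge {v : Fin α} (h : ¬ (v:ℕ) < α - 2*(β-1)) :
    idx α β r hβ hαβ v
      = ⟨((v:ℕ) - (α - 2*(β-1)))/2 + 1, by have := v.2; omega⟩ := dif_neg h

lemma f0_adj_idx {v w : Fin α}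
    (hadj : (firstGraph α r (f0 α β r hβ hαβ hαr)).Adj v w) :
    idx α β r hβ hαβ v = idx α β r hβ hαβ w := by
  obtain ⟨hne, p, hpα, hfp⟩ := hadj
  unfold f0 at hfp
  split_ifs at hfp with h1
  · rw [Sym2.eq_iff] at hfp
    have hnxt : nxt (α - 2*(β-1)) (p:ℕ) < α - 2*(β-1) := by unfold nxt; split <;> omega
    have hv : (v:ℕ) < α - 2*(β-1) ∧ (w:ℕ) < α - 2*(β-1) := by
      rcases hfp with ⟨ha, hb⟩ | ⟨ha, hb⟩ <;> rw [← ha, ← hb] <;>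
        simp only [Fin.val_mk] <;> exact ⟨by omega, by omega⟩
    unfold idx
    rw [dif_pos hv.1, dif_pos hv.2]
  · rw [Sym2.eq_iff] at hfp
    have hv : ((v:ℕ) - (α - 2*(β-1)))/2 = ((p:ℕ) - (α - 2*(β-1)))/2 ∧ ¬ (v:ℕ) < α - 2*(β-1)
        ∧ ((w:ℕ) - (α - 2*(β-1)))/2 = ((p:ℕ) - (α - 2*(β-1)))/2 ∧ ¬ (w:ℕ) < α - 2*(β-1) := by
      rcases hfp with ⟨ha, hb⟩ | ⟨ha, hb⟩ <;> rw [← ha, ← hb] <;>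
        simp only [Fin.val_mk] <;> omega
    unfold idx
    rw [dif_neg hv.2.1, dif_neg hv.2.2.2]
    rw [Fin.ext_iff]
    simp only [Fin.val_mk]
    omega

lemma f0_walk_idx {v w : Fin α} (pw : (firstGraph α r (f0 α β r hβ hαβ hαr)).Walk v w) :
    idx α β r hβ hαβ v = idx α β r hβ hαβ w := by
  induction pw with
  | nil => rfl
  | cons hadj _ ih => exact (f0_adj_idx α β r hβ hαβ hαr hadj).trans ih

lemma f0_adj_cycle (n : ℕ) (hn : n + 1 < α - 2*(β-1)) :
    (firstGraph α r (f0 α β r hβ hαβ hαr)).Adj ⟨n, by omega⟩ ⟨n+1, by omega⟩ := by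
  refine ⟨Fin.ne_of_val_ne (by simp only [Fin.val_mk]; omega), ⟨n, by omega⟩,
    (by show n < α; omega), ?_⟩
  unfold f0
  rw [dif_pos (show n < α - 2*(β-1) by omega)]
  refine Sym2.eq_iff.mpr (Or.inl ⟨Fin.ext rfl, Fin.ext ?_⟩)
  show nxt (α - 2*(β-1)) n = n + 1
  unfold nxt
  rw [if_pos hn]

lemma f0_reach_zero (n : ℕ) (hn : n < α - 2*(β-1)) :
    (firstGraph α r (f0 α β r hβ hαβ hαr)).Reachable ⟨0, by omega⟩ ⟨n, by omega⟩ := by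
  induction n with
  | zero => exact SimpleGraph.Reachable.refl _
  | succ m ih =>
      exact (ih (by omega)).trans (f0_adj_cycle α β r hβ hαβ hαr m (by omega)).reachable

lemma f0_adj_pair (j : ℕ) (hj : α - 2*(β-1) + 2*j + 1 < α) :
    (firstGraph α r (f0 α β r hβ hαβ hαr)).Adj
      ⟨α - 2*(β-1) + 2*j, by omega⟩ ⟨α - 2*(β-1) + 2*j + 1, by omega⟩ := by
  refine ⟨Fin.ne_of_val_ne (by simp only [Fin.val_mk]; omega),
    ⟨α - 2*(β-1) + 2*j, by omega⟩, (by show α - 2*(β-1) + 2*j < α; omega), ?_⟩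
  unfold f0
  rw [dif_neg (show ¬ α - 2*(β-1) + 2*j < α - 2*(β-1) by omega),
    dif_pos (show α - 2*(β-1) + 2*j < α by omega)]
  refine Sym2.eq_iff.mpr (Or.inl ⟨Fin.ext ?_, Fin.ext ?_⟩)
  · show α - 2*(β-1) + 2*((α - 2*(β-1) + 2*j - (α - 2*(β-1)))/2) = α - 2*(β-1) + 2*j
    omega
  · show α - 2*(β-1) + 2*((α - 2*(β-1) + 2*j - (α - 2*(β-1)))/2) + 1 = α - 2*(β-1) + 2*j + 1
    omega

set_option maxHeartbeats 1000000 in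
lemma f0_reach_of_idx {v w : Fin α} (hidx : idx α β r hβ hαβ v = idx α β r hβ hαβ w) :
    (firstGraph α r (f0 α β r hβ hαβ hαr)).Reachable v w := by
  by_cases hv : (v:ℕ) < α - 2*(β-1)
  · have hw : (w:ℕ) < α - 2*(β-1) := by
      by_contra hw
      unfold idx at hidx
      rw [dif_pos hv, dif_neg hw, Fin.ext_iff] at hidx
      simp only [Fin.val_mk] at hidx
      omega
    have h1 : v = (⟨(v:ℕ), by omega⟩ : Fin α) := Fin.ext rfl
    have h2 : w = (⟨(w:ℕ), by omega⟩ : Fin α) := Fin.ext rfl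
    rw [h1, h2]
    exact (f0_reach_zero α β r hβ hαβ hαr (v:ℕ) hv).symm.trans
      (f0_reach_zero α β r hβ hαβ hαr (w:ℕ) hw)
  · have hw : ¬ (w:ℕ) < α - 2*(β-1) := by
      by_contra hw
      unfold idx at hidx
      rw [dif_neg hv, dif_pos hw, Fin.ext_iff] at hidx
      simp only [Fin.val_mk] at hidx
      omega
    have hj : ((v:ℕ) - (α - 2*(β-1)))/2 = ((w:ℕ) - (α - 2*(β-1)))/2 := by
      unfold idx at hidx
      rw [dif_neg hv, dif_neg hw, Fin.ext_iff] at hidx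
      simp only [Fin.val_mk] at hidx
      omega
    have hvα := v.2
    have hwα := w.2
    obtain ⟨j, hj1, hdv, hdw⟩ : ∃ j : ℕ, α - 2*(β-1) + 2*j + 1 < α ∧
        ((v:ℕ) = α - 2*(β-1) + 2*j ∨ (v:ℕ) = α - 2*(β-1) + 2*j + 1) ∧
        ((w:ℕ) = α - 2*(β-1) + 2*j ∨ (w:ℕ) = α - 2*(β-1) + 2*j + 1) :=
      ⟨((v:ℕ) - (α - 2*(β-1)))/2, by omega, by omega, by omega⟩
    have hpair := (f0_adj_pair α β r hβ hαβ hαr j hj1).reachable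
    have hv' : v = (⟨α - 2*(β-1) + 2*j, by omega⟩ : Fin α)
        ∨ v = (⟨α - 2*(β-1) + 2*j + 1, by omega⟩ : Fin α) := by
      rcases hdv with h' | h'
      · exact Or.inl (Fin.ext h')
      · exact Or.inr (Fin.ext h')
    have hw' : w = (⟨α - 2*(β-1) + 2*j, by omega⟩ : Fin α)
        ∨ w = (⟨α - 2*(β-1) + 2*j + 1, by omega⟩ : Fin α) := by
      rcases hdw with h' | h'
      · exact Or.inl (Fin.ext h')
      · exact Or.inr (Fin.ext h')
    rcases hv' with h1 | h1 <;> rcases hw' with h2 | h2 <;> rw [h1, h2]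
    · exact hpair
    · exact hpair.symm

lemma f0_mk_eq_iff (v w : Fin α) :
    (firstGraph α r (f0 α β r hβ hαβ hαr)).connectedComponentMk v
      = (firstGraph α r (f0 α β r hβ hαβ hαr)).connectedComponentMk w
    ↔ idx α β r hβ hαβ v = idx α β r hβ hαβ w := by
  rw [SimpleGraph.ConnectedComponent.eq]
  constructor
  · rintro ⟨pw⟩; exact f0_walk_idx α β r hβ hαβ hαr pw
  · exact f0_reach_of_idx α β r hβ hαβ hαr

lemma card_filter_lt (m n : ℕ) (hmn : m ≤ n) :
    (Finset.univ.filter (fun v : Fin n => (v:ℕ) < m)).card = m := by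
  have h : (Finset.univ.filter (fun v : Fin n => (v:ℕ) < m)).card
      = (Finset.univ : Finset (Fin m)).card := by
    refine Finset.card_bij' (fun v hv => (⟨(v:ℕ), (Finset.mem_filter.mp hv).2⟩ : Fin m))
      (fun i _ => (⟨(i:ℕ), lt_of_lt_of_le i.2 hmn⟩ : Fin n)) ?_ ?_ ?_ ?_
    · intro v hv; exact Finset.mem_univ _
    · intro i _
      simp only [Finset.mem_filter, Finset.mem_univ, true_and, Fin.val_mk]
      exact i.2
    · intro v hv; exact Fin.ext rfl
    · intro i _; exact Fin.ext rfl
  rw [h, Finset.card_univ, Fintype.card_fin]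

lemma f0_numCC :
    Nat.card (firstGraph α r (f0 α β r hβ hαβ hαr)).ConnectedComponent = β := by
  have hwalk : ∀ (v w : Fin α) (pw : (firstGraph α r (f0 α β r hβ hαβ hαr)).Walk v w),
      pw.IsPath → idx α β r hβ hαβ v = idx α β r hβ hαβ w :=
    fun v w pw _ => f0_walk_idx α β r hβ hαβ hαr pw
  set φ : (firstGraph α r (f0 α β r hβ hαβ hαr)).ConnectedComponent → Fin β :=
    SimpleGraph.ConnectedComponent.lift (idx α β r hβ hαβ) hwalk with hφ
  have hφmk : ∀ v, φ ((firstGraph α r (f0 α β r hβ hαβ hαr)).connectedComponentMk v)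
      = idx α β r hβ hαβ v := fun v => rfl
  have hbij : Function.Bijective φ := by
    constructor
    · intro c c'
      refine SimpleGraph.ConnectedComponent.ind₂ (fun v w h => ?_) c c'
      rw [hφmk, hφmk] at h
      exact (f0_mk_eq_iff α β r hβ hαβ hαr v w).mpr h
    · intro jj
      by_cases hj : (jj:ℕ) = 0
      · refine ⟨(firstGraph α r (f0 α β r hβ hαβ hαr)).connectedComponentMk ⟨0, by omega⟩, ?_⟩
        rw [hφmk, idx_lt α β r hβ hαβ (by show (0:ℕ) < α - 2*(β-1); omega)]
        exact Fin.ext (by simp only [Fin.val_mk]; omega)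
      · have hj2 := jj.2
        refine ⟨(firstGraph α r (f0 α β r hβ hαβ hαr)).connectedComponentMk
          ⟨α - 2*(β-1) + 2*((jj:ℕ)-1), by omega⟩, ?_⟩
        rw [hφmk, idx_ge α β r hβ hαβ
          (by show ¬ α - 2*(β-1) + 2*((jj:ℕ)-1) < α - 2*(β-1); omega)]
        exact Fin.ext (by simp only [Fin.val_mk]; omega)
  rw [Nat.card_congr (Equiv.ofBijective φ hbij), Nat.card_eq_fintype_card, Fintype.card_fin]

lemma f0_supp :
    ∃ c₀ : (firstGraph α r (f0 α β r hβ hαβ hαr)).ConnectedComponent,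
      Nat.card c₀.supp = α - 2*(β - 1) ∧
      ∀ c : (firstGraph α r (f0 α β r hβ hαβ hαr)).ConnectedComponent, c ≠ c₀ →
        Nat.card c.supp = 2 := by
  refine ⟨(firstGraph α r (f0 α β r hβ hαβ hαr)).connectedComponentMk ⟨0, by omega⟩, ?_, ?_⟩
  · have hsupp : ((firstGraph α r (f0 α β r hβ hαβ hαr)).connectedComponentMk
        ⟨0, by omega⟩).supp
        = ↑(Finset.univ.filter (fun v : Fin α => (v:ℕ) < α - 2*(β-1))) := by
      ext v
      rw [SimpleGraph.ConnectedComponent.mem_supp_iff, f0_mk_eq_iff]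
      simp only [Finset.coe_filter, Finset.mem_univ, true_and, Set.mem_setOf_eq]
      rw [idx_lt α β r hβ hαβ (v := ⟨0, by omega⟩) (by show (0:ℕ) < α - 2*(β-1); omega)]
      by_cases h : (v:ℕ) < α - 2*(β-1)
      · rw [idx_lt α β r hβ hαβ h]
        simp [h]
      · rw [idx_ge α β r hβ hαβ h]
        simp only [Fin.ext_iff, Fin.val_mk]
        constructor
        · intro hcon; omega
        · intro hcon; exact absurd hcon h
    rw [hsupp, Nat.card_coe_set_eq, Set.ncard_coe_finset, card_filter_lt _ _ (by omega)]
  · intro c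
    refine SimpleGraph.ConnectedComponent.ind (fun v hc => ?_) c
    have hvk : ¬ (v:ℕ) < α - 2*(β-1) := by
      intro hvlt
      refine hc ?_
      rw [f0_mk_eq_iff, idx_lt α β r hβ hαβ hvlt,
        idx_lt α β r hβ hαβ (v := ⟨0, by omega⟩) (by show (0:ℕ) < α - 2*(β-1); omega)]
    have hvα := v.2
    have hsupp : ((firstGraph α r (f0 α β r hβ hαβ hαr)).connectedComponentMk v).supp
        = {(⟨α - 2*(β-1) + 2*(((v:ℕ) - (α - 2*(β-1)))/2), by omega⟩ : Fin α),
           (⟨α - 2*(β-1) + 2*(((v:ℕ) - (α - 2*(β-1)))/2) + 1, by omega⟩ : Fin α)} := by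
      ext w
      rw [SimpleGraph.ConnectedComponent.mem_supp_iff, f0_mk_eq_iff]
      simp only [Set.mem_insert_iff, Set.mem_singleton_iff, Fin.ext_iff, Fin.val_mk]
      rw [idx_ge α β r hβ hαβ hvk]
      by_cases h : (w:ℕ) < α - 2*(β-1)
      · rw [idx_lt α β r hβ hαβ h]
        simp only [Fin.ext_iff, Fin.val_mk]
        constructor
        · intro hcon; omega
        · intro hcon; omega
      · rw [idx_ge α β r hβ hαβ h]
        simp only [Fin.ext_iff, Fin.val_mk]
        have hwα := w.2
        omega
    rw [hsupp, Nat.card_coe_set_eq,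
      Set.ncard_pair (Fin.ne_of_val_ne (by simp only [Fin.val_mk]; omega))]

lemma f0_tail :
    ∀ p : Fin r, α ≤ (p:ℕ) → ∀ v w : Fin α, v ∈ f0 α β r hβ hαβ hαr p →
      w ∈ f0 α β r hβ hαβ hαr p →
      (firstGraph α r (f0 α β r hβ hαβ hαr)).Reachable v w := by
  intro p hp v w hv hw
  have hmem : ∀ u : Fin α, u ∈ f0 α β r hβ hαβ hαr p → (u:ℕ) = 0 ∨ (u:ℕ) = 1 := by
    intro u hu
    rw [f0_mem_iff] at hu
    rcases hu with ⟨h1, -⟩ | ⟨⟨-, h2⟩, -⟩ | ⟨-, h3⟩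
    · omega
    · omega
    · exact h3
  refine f0_reach_of_idx α β r hβ hαβ hαr ?_
  have hidx : ∀ u : Fin α, ((u:ℕ) = 0 ∨ (u:ℕ) = 1) → idx α β r hβ hαβ u = ⟨0, hβ⟩ := by
    intro u hu
    exact idx_lt α β r hβ hαβ (by omega)
  rw [hidx v (hmem v hv), hidx w (hmem w hw)]

lemma f0_even (heven : Even (r - α)) :
    ∀ v, Even (edgeDeg α r (f0 α β r hβ hαβ hαr) v) := by
  intro v
  have hsplit : edgeDeg α r (f0 α β r hβ hαβ hαr) v =
      ((Finset.univ.filter (fun p : Fin r => v ∈ f0 α β r hβ hαβ hαr p ∧ (p:ℕ) < α)).card) +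
      ((Finset.univ.filter (fun p : Fin r => v ∈ f0 α β r hβ hαβ hαr p ∧ ¬ (p:ℕ) < α)).card) := by
    rw [edgeDeg]
    rw [← Finset.card_filter_add_card_filter_not (s := Finset.univ.filter
      (fun p : Fin r => v ∈ f0 α β r hβ hαβ hαr p)) (fun p => (p:ℕ) < α)]
    rw [Finset.filter_filter, Finset.filter_filter]
  have hfirst : (Finset.univ.filter
      (fun p : Fin r => v ∈ f0 α β r hβ hαβ hαr p ∧ (p:ℕ) < α)).card = 2 := by
    rw [← f0_firstDeg α β r hβ hαβ hαr v, firstDeg]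
    congr 1
    ext p
    simp only [Finset.mem_filter, Finset.mem_univ, true_and]
    tauto
  rw [hsplit, hfirst]
  by_cases h01 : (v:ℕ) = 0 ∨ (v:ℕ) = 1
  · have htail : (Finset.univ.filter
        (fun p : Fin r => v ∈ f0 α β r hβ hαβ hαr p ∧ ¬ (p:ℕ) < α)).card = r - α := by
      have hset : (Finset.univ.filter
          (fun p : Fin r => v ∈ f0 α β r hβ hαβ hαr p ∧ ¬ (p:ℕ) < α))
          = Finset.univ.filter (fun p : Fin r => ¬ (p:ℕ) < α) := by
        ext p
        simp only [Finset.mem_filter, Finset.mem_univ, true_and, and_iff_right_iff_imp]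
        intro hp
        rw [f0_mem_iff]
        exact Or.inr (Or.inr ⟨by omega, h01⟩)
      rw [hset]
      have h1 := Finset.card_filter_add_card_filter_not
        (s := (Finset.univ : Finset (Fin r))) (fun p : Fin r => (p:ℕ) < α)
      rw [card_filter_lt α r hαr, Finset.card_univ, Fintype.card_fin] at h1
      omega
    rw [htail]
    obtain ⟨m, hm⟩ := heven
    exact ⟨1 + m, by omega⟩
  · have htail : (Finset.univ.filter
        (fun p : Fin r => v ∈ f0 α β r hβ hαβ hαr p ∧ ¬ (p:ℕ) < α)).card = 0 := by
      rw [Finset.card_eq_zero]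
      rw [Finset.filter_eq_empty_iff]
      intro p _
      rw [f0_mem_iff]
      push_neg at h01
      push_neg
      intro hmem
      rcases hmem with ⟨h1, -⟩ | ⟨⟨-, h2⟩, -⟩ | ⟨-, h3⟩ <;> omega
    rw [htail]
    exact ⟨1, by omega⟩

lemma f0_mem (heven : Even (r - α)) :
    f0 α β r hβ hαβ hαr ∈ Hfam α β r ∩ {f | ∀ v, Even (edgeDeg α r f v)} := by
  refine ⟨⟨f0_nodiag α β r hβ hαβ hαr, f0_firstDeg α β r hβ hαβ hαr,
    f0_numCC α β r hβ hαβ hαr, f0_supp α β r hβ hαβ hαr, f0_tail α β r hβ hαβ hαr⟩,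
    f0_even α β r hβ hαβ hαr heven⟩

end Witness


theorem Hfam_even_degree_prob :
    ∃ C : ℝ, 0 < C ∧ ∀ r α β : ℕ, 1 ≤ β → 2*β ≤ α → α ≤ r → Even (r - α) →
      (2:ℝ)^(-(C * r)) ≤
        (((Hfam α β r ∩ {f | ∀ v, Even (edgeDeg α r f v)}).ncard : ℝ) /
          ((Hfam α β r).ncard : ℝ)) := by
  refine ⟨1, one_pos, ?_⟩
  intro r α β hβ hαβ hαr heven
  obtain ⟨h, hr⟩ : ∃ h, r = α + h + h := by
    obtain ⟨m, hm⟩ := heven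
    exact ⟨m, by omega⟩
  subst hr
  have hf0 : f0 α β (α+h+h) hβ hαβ (by omega) ∈
      Hfam α β (α+h+h) ∩ {f | ∀ v, Even (edgeDeg α (α+h+h) f v)} :=
    f0_mem α β (α+h+h) hβ hαβ (by omega) ⟨h, by omega⟩
  have hN0 : 0 < (Hfam α β (α+h+h) ∩ {f | ∀ v, Even (edgeDeg α (α+h+h) f v)}).ncard :=
    (Set.ncard_pos (Set.toFinite _)).mpr ⟨_, hf0⟩
  have hND : (Hfam α β (α+h+h) ∩ {f | ∀ v, Even (edgeDeg α (α+h+h) f v)}).ncard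
      ≤ (Hfam α β (α+h+h)).ncard :=
    Set.ncard_le_ncard Set.inter_subset_left (Set.toFinite _)
  have hD0 : (0:ℝ) < ((Hfam α β (α+h+h)).ncard : ℝ) := by
    have : 0 < (Hfam α β (α+h+h)).ncard := lt_of_lt_of_le hN0 hND
    exact_mod_cast this
  have hcast : ((Hfam α β (α+h+h)).ncard : ℝ) ≤ (2:ℝ)^(α+h+h) *
      ((Hfam α β (α+h+h) ∩ {f | ∀ v, Even (edgeDeg α (α+h+h) f v)}).ncard : ℝ) := by
    calc ((Hfam α β (α+h+h)).ncard : ℝ)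
        ≤ ((2^α * (Hfam α β (α+h+h) ∩ {f | ∀ v, Even (edgeDeg α (α+h+h) f v)}).ncard : ℕ) : ℝ) := by
          exact_mod_cast main_count α β h
      _ = (2:ℝ)^α * ((Hfam α β (α+h+h) ∩ {f | ∀ v, Even (edgeDeg α (α+h+h) f v)}).ncard : ℝ) := by
          push_cast; ring
      _ ≤ (2:ℝ)^(α+h+h) *
          ((Hfam α β (α+h+h) ∩ {f | ∀ v, Even (edgeDeg α (α+h+h) f v)}).ncard : ℝ) := by
          refine mul_le_mul_of_nonneg_right ?_ (by positivity)
          exact pow_le_pow_right₀ (by norm_num) (by omega)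
  have hexp : (2:ℝ)^(-((1:ℝ) * ((α+h+h : ℕ) : ℝ))) = ((2:ℝ)^(α+h+h))⁻¹ := by
    rw [one_mul, Real.rpow_neg (by norm_num), Real.rpow_natCast]
  rw [hexp, le_div_iff₀ hD0, inv_mul_le_iff₀ (by positivity)]
  exact hcast


end FHGraph
end
end

section
/- Let n, m, r be positive integers and let S = ⟨(j_p, ℓ_p)⟩_{p∈[r]} be any sequence of r ordered pairs of distinct indices in [n]. If h : [n] → [m] is chosen uniformly at random, then E[ ∏_{p∈[r]} 1[h(j_p) = h(ℓ_p)] ] = m^{−(α(S) − β(S))}. -/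
open scoped BigOperators Classical
noncomputable section

namespace FH

/-- Expectation over a uniformly random hash function `h : [n] → [m]`. -/
def hE (n m : ℕ) (f : (Fin n → Fin m) → ℝ) : ℝ :=
  (∑ h : Fin n → Fin m, f h) / (Fintype.card (Fin n → Fin m) : ℝ)

/-- `V(S)`: the set of vertices incident to some edge of `G_S` (equivalently, lying in a
connected component of `G_S` with at least two vertices, as all edges join distinct vertices). -/
def VS (n r : ℕ) (S : Fin r → Fin n × Fin n) : Finset (Fin n) :=
  Finset.univ.filter (fun q : Fin n => ∃ p, q = (S p).1 ∨ q = (S p).2)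

/-- The simple graph underlying the multigraph `G_S`. -/
def graphS (n r : ℕ) (S : Fin r → Fin n × Fin n) : SimpleGraph (Fin n) where
  Adj v w := v ≠ w ∧ ∃ p, S p = (v, w) ∨ S p = (w, v)
  symm := by
    constructor
    rintro v w ⟨hvw, p, hp⟩
    exact ⟨hvw.symm, p, hp.symm⟩
  loopless := by constructor; rintro v ⟨h, -⟩; exact h rfl

/-- `α(S) = |V(S)|`. -/
def alphaS (n r : ℕ) (S : Fin r → Fin n × Fin n) : ℕ := (VS n r S).card

/-- `β(S)`: the number of connected components of `G_S` containing at least two vertices. -/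
def betaS (n r : ℕ) (S : Fin r → Fin n × Fin n) : ℕ :=
  ((graphS n r S).connectedComponentMk '' (VS n r S : Set (Fin n))).ncard

section Aux

variable {n m r : ℕ} {S : Fin r → Fin n × Fin n}

lemma mem_VS {v : Fin n} : v ∈ VS n r S ↔ ∃ p, v = (S p).1 ∨ v = (S p).2 := by
  simp [VS]

lemma adj_eq {h : Fin n → Fin m} (hh : ∀ p, h (S p).1 = h (S p).2)
    {v w : Fin n} (hvw : (graphS n r S).Adj v w) : h v = h w := by
  obtain ⟨-, p, hp | hp⟩ := hvw
  · have h1 : (S p).1 = v := by rw [hp]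
    have h2 : (S p).2 = w := by rw [hp]
    rw [← h1, ← h2]; exact hh p
  · have h1 : (S p).1 = w := by rw [hp]
    have h2 : (S p).2 = v := by rw [hp]
    rw [← h1, ← h2]; exact (hh p).symm

lemma reach_eq {h : Fin n → Fin m} (hh : ∀ p, h (S p).1 = h (S p).2)
    {v w : Fin n} (hvw : (graphS n r S).Reachable v w) : h v = h w := by
  obtain ⟨wlk⟩ := hvw
  induction wlk with
  | nil => rfl
  | cons a p ih => exact (adj_eq hh a).trans ih

lemma not_mem_VS_isolated {v w : Fin n} (hv : v ∉ VS n r S)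
    (hvw : (graphS n r S).Reachable v w) : v = w := by
  obtain ⟨wlk⟩ := hvw
  cases wlk with
  | nil => rfl
  | cons a p =>
    exfalso
    obtain ⟨-, q, hq | hq⟩ := a
    · exact hv (mem_VS.2 ⟨q, Or.inl (by rw [hq])⟩)
    · exact hv (mem_VS.2 ⟨q, Or.inr (by rw [hq])⟩)

/-- Hash functions respecting all collisions correspond to colourings of components. -/
def collEquiv (n m r : ℕ) (S : Fin r → Fin n × Fin n) (hS : ∀ p, (S p).1 ≠ (S p).2) :
    {h : Fin n → Fin m // ∀ p, h (S p).1 = h (S p).2} ≃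
      ((graphS n r S).ConnectedComponent → Fin m) where
  toFun h := SimpleGraph.ConnectedComponent.lift h.1
    (fun v w p _ => reach_eq h.2 ⟨p⟩)
  invFun g := ⟨fun v => g ((graphS n r S).connectedComponentMk v), by
    intro p
    have hadj : (graphS n r S).Adj (S p).1 (S p).2 := ⟨hS p, p, Or.inl rfl⟩
    exact congrArg g (SimpleGraph.ConnectedComponent.sound hadj.reachable)⟩
  left_inv h := by ext v; rfl
  right_inv g := by
    ext c
    induction c using SimpleGraph.ConnectedComponent.ind with
    | _ v => rfl

lemma card_components (n r : ℕ) (S : Fin r → Fin n × Fin n) :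
    Fintype.card (graphS n r S).ConnectedComponent =
      betaS n r S + (n - alphaS n r S) := by
  classical
  set G := graphS n r S with hG
  set f := G.connectedComponentMk with hf
  have hsurj : Set.univ = f '' (VS n r S : Set (Fin n)) ∪ f '' ((VS n r S : Set (Fin n))ᶜ) := by
    rw [← Set.image_union, Set.union_compl_self, Set.image_univ]
    exact (Set.range_eq_univ.2 (fun c =>
      c.exists_rep.imp fun v hv => hv)).symm
  have hdisj : Disjoint (f '' (VS n r S : Set (Fin n))) (f '' ((VS n r S : Set (Fin n))ᶜ)) := by
    rw [Set.disjoint_left]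
    rintro c ⟨v, hv, rfl⟩ ⟨w, hw, hwc⟩
    have : G.Reachable w v := (SimpleGraph.ConnectedComponent.eq.1 hwc)
    exact hw (by rw [not_mem_VS_isolated hw this]; exact hv)
  have hinj : Set.InjOn f ((VS n r S : Set (Fin n))ᶜ) := by
    intro v hv w _ hvw
    exact not_mem_VS_isolated hv (SimpleGraph.ConnectedComponent.eq.1 hvw)
  have h1 : (Set.univ : Set G.ConnectedComponent).ncard =
      (f '' (VS n r S : Set (Fin n))).ncard + (f '' ((VS n r S : Set (Fin n))ᶜ)).ncard := by
    rw [hsurj]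
    exact Set.ncard_union_eq hdisj (Set.toFinite _) (Set.toFinite _)
  have h2 : (f '' ((VS n r S : Set (Fin n))ᶜ)).ncard = n - alphaS n r S := by
    rw [Set.ncard_image_of_injOn hinj, ← Finset.coe_compl, Set.ncard_coe_finset,
      Finset.card_compl]
    simp [alphaS]
  rw [← Nat.card_eq_fintype_card, ← Set.ncard_univ, h1, h2]
  rfl

end Aux


theorem collision_product_expectation :
    ∀ n m r : ℕ, 0 < n → 0 < m →
      ∀ S : Fin r → Fin n × Fin n, (∀ p, (S p).1 ≠ (S p).2) →
        hE n m (fun h => ∏ p : Fin r, (if h (S p).1 = h (S p).2 then (1:ℝ) else 0)) =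
          (m:ℝ) ^ ((betaS n r S : ℤ) - (alphaS n r S : ℤ)) := by
  intro n m r hn hm S hS
  classical
  have hcount : (∑ h : Fin n → Fin m,
      ∏ p : Fin r, (if h (S p).1 = h (S p).2 then (1:ℝ) else 0)) =
      (m : ℝ) ^ (betaS n r S + (n - alphaS n r S)) := by
    have hprod : ∀ h : Fin n → Fin m,
        (∏ p : Fin r, (if h (S p).1 = h (S p).2 then (1:ℝ) else 0)) =
        (if ∀ p, h (S p).1 = h (S p).2 then (1:ℝ) else 0) := by
      intro h
      by_cases hc : ∀ p, h (S p).1 = h (S p).2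
      · simp [hc]
      · rw [if_neg hc]
        push_neg at hc
        obtain ⟨p, hp⟩ := hc
        refine Finset.prod_eq_zero (Finset.mem_univ p) ?_
        exact if_neg hp
    simp only [hprod]
    rw [Finset.sum_boole]
    have hcard : (Finset.univ.filter
        (fun h : Fin n → Fin m => ∀ p, h (S p).1 = h (S p).2)).card =
        m ^ (betaS n r S + (n - alphaS n r S)) := by
      rw [← Fintype.card_subtype, Fintype.card_congr (collEquiv n m r S hS),
        Fintype.card_fun, card_components, Fintype.card_fin]
    rw [hcard]; push_cast; ring
  have halpha : alphaS n r S ≤ n := by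
    simpa [alphaS] using Finset.card_le_univ (VS n r S)
  have hm0 : (m : ℝ) ≠ 0 := by positivity
  rw [hE, hcount]
  rw [Fintype.card_fun, Fintype.card_fin, Fintype.card_fin]
  push_cast
  rw [← zpow_natCast (m:ℝ) (betaS n r S + (n - alphaS n r S)),
    ← zpow_natCast (m:ℝ) n, ← zpow_sub₀ hm0]
  congr 1
  push_cast [Nat.cast_sub halpha]
  ring

end FH
end
end
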